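/- arXiv:2012.05233 — 9 statements merged into one kernel-verified Lean document; each statement's English description precedes it below -/
import Mathlib

section
/- Let A_0 = id and A_{j+1} = A_j ∘ R_ψ ∘ A_j⁻¹ ∘ O ∘ A_j for j ≥ 0. Then for every k ≥ 0, A_k(ψ) = sin(3^k θ)·g + cos(3^k θ)·b (perfect recursive amplitude amplification triples the angle at each level). -/
/-- Perfect recursive amplitude amplification: with `A_0 = id` and
`A_{j+1} = A_j ∘ R_ψ ∘ A_j⁻¹ ∘ O ∘ A_j`, we have
`A_k ψ = sin(3^k θ) • g + cos(3^k θ) • b` for every `k ≥ 0`. -/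
theorem stmt_0 {E : Type*} [NormedAddCommGroup E] [InnerProductSpace ℂ E]
    (g b : E) (hg : ‖g‖ = 1) (hb : ‖b‖ = 1) (hgb : (inner ℂ g b : ℂ) = 0)
    (θ : ℝ) (ψ : E) (hψ : ψ = Real.sin θ • g + Real.cos θ • b)
    (Rψ : E ≃ₗᵢ[ℂ] E) (hRψ : ∀ x : E, Rψ x = ((2 : ℂ) * inner ℂ ψ x) • ψ - x)
    (O : E ≃ₗᵢ[ℂ] E) (hOg : O g = -g) (hOb : O b = b)
    (A : ℕ → (E ≃ₗᵢ[ℂ] E)) (hA0 : A 0 = LinearIsometryEquiv.refl ℂ E)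
    (hAstep : ∀ (j : ℕ) (x : E), A (j + 1) x = A j (Rψ ((A j).symm (O (A j x))))) :
    ∀ k : ℕ,
      A k ψ = Real.sin ((3 : ℝ) ^ k * θ) • g + Real.cos ((3 : ℝ) ^ k * θ) • b := by
  set v : ℝ → E := fun φ => Real.sin φ • g + Real.cos φ • b with hv
  have hmap : ∀ (f : E ≃ₗᵢ[ℂ] E) (r : ℝ) (x : E), f (r • x) = r • f x := fun f r x =>
    f.toLinearIsometry.toLinearMap.map_smul_of_tower r x
  have hgg : (inner ℂ g g : ℂ) = 1 := by
    rw [inner_self_eq_norm_sq_to_K, hg]; norm_num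
  have hbb : (inner ℂ b b : ℂ) = 1 := by
    rw [inner_self_eq_norm_sq_to_K, hb]; norm_num
  have hbg : (inner ℂ b g : ℂ) = 0 := by
    rw [← inner_conj_symm, hgb]; simp
  have hsm : ∀ (r : ℝ) (x : E), r • x = (r : ℂ) • x := by
    intro r x
    simp [Complex.coe_smul]
  have hinner : ∀ φ : ℝ, (inner ℂ ψ (v φ) : ℂ) = (Real.cos (θ - φ) : ℂ) := by
    intro φ
    simp only [hψ, hv, hsm, inner_add_left, inner_add_right, inner_smul_left, inner_smul_right,
      hgg, hbb, hgb, hbg, Complex.conj_ofReal, Real.cos_sub]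
    push_cast
    ring
  have hO : ∀ φ : ℝ, O (v φ) = v (-φ) := by
    intro φ
    simp [hv, map_add, hmap, hOg, hOb, Real.sin_neg, Real.cos_neg, smul_neg, neg_smul]
  have hR : ∀ φ : ℝ, Rψ (v φ) = v (2 * θ - φ) := by
    intro φ
    rw [hRψ, hinner, hψ]
    have h1 : Real.sin (2 * θ - φ) = 2 * Real.cos (θ - φ) * Real.sin θ - Real.sin φ := by
      have : 2 * θ - φ = θ + (θ - φ) := by ring
      rw [this, Real.sin_add, Real.cos_sub, Real.sin_sub]
      linear_combination (-Real.sin φ) * Real.sin_sq_add_cos_sq θ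
    have h2 : Real.cos (2 * θ - φ) = 2 * Real.cos (θ - φ) * Real.cos θ - Real.cos φ := by
      have : 2 * θ - φ = θ + (θ - φ) := by ring
      rw [this, Real.cos_add, Real.cos_sub, Real.sin_sub]
      linear_combination (-Real.cos φ) * Real.sin_sq_add_cos_sq θ
    simp only [hv, smul_add, smul_smul, h1, h2]
    have hc : ∀ r s : ℝ, ((2:ℂ) * (r:ℂ)) • (s • g) = ((2*r*s : ℝ)) • g := by
      intro r s
      rw [smul_comm]
      norm_cast
      rw [smul_smul]
      push_cast
      ring_nf
    have hc' : ∀ r s : ℝ, ((2:ℂ) * (r:ℂ)) • (s • b) = ((2*r*s : ℝ)) • b := by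
      intro r s
      rw [smul_comm]
      norm_cast
      rw [smul_smul]
      push_cast
      ring_nf
    rw [hc, hc']
    rw [sub_smul, sub_smul]
    abel
  have hA : ∀ (j : ℕ) (φ : ℝ), A j (v φ) = v (φ + ((3:ℝ) ^ j - 1) * θ) := by
    intro j
    induction j with
    | zero => intro φ; simp [hA0]
    | succ j ih =>
      have ihsymm : ∀ φ : ℝ, (A j).symm (v φ) = v (φ - ((3:ℝ) ^ j - 1) * θ) := by
        intro φ
        have := ih (φ - ((3:ℝ) ^ j - 1) * θ)
        rw [sub_add_cancel] at this
        rw [← this, LinearIsometryEquiv.symm_apply_apply]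
      intro φ
      rw [hAstep, ih, hO, ihsymm, hR, ih]
      congr 1
      ring
  intro k
  have h := hA k θ
  rw [show θ + ((3:ℝ) ^ k - 1) * θ = (3:ℝ) ^ k * θ by ring] at h
  rw [hψ]
  simpa [hv] using h
end

section
/- Let n ≥ 1 and let P : {−1,1}^n × {−1,1}^n → ℝ satisfy |P(x,y) − IP_n(x,y)| ≤ 1/3 for all x, y ∈ {−1,1}^n. Then the spectral norm of P (as a function of 2n Boolean variables) is at least (2/3)·2^n, i.e., ∑_{S,T ⊆ [n]} |P̂(S,T)| ≥ (2/3)·2^n where P̂(S,T) = 4^{−n} ∑_{x,y} P(x,y)·χ_S(x)·χ_T(y). -/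
/-- Encoding of a `{-1,1}`-bit by a Boolean: `true ↦ -1`, `false ↦ 1`. -/
def pm (b : Bool) : ℝ := if b then -1 else 1

lemma pm_abs (b : Bool) : |pm b| = 1 := by cases b <;> simp [pm]

lemma pm_sq (b : Bool) : pm b * pm b = 1 := by cases b <;> simp [pm]

/-- Functions to Bool are the same as Finsets. -/
def fsEquiv (n : ℕ) : (Fin n → Bool) ≃ Finset (Fin n) where
  toFun f := Finset.univ.filter (fun i => f i = true)
  invFun S := fun i => decide (i ∈ S)
  left_inv f := by funext i; simp
  right_inv S := by ext i; simp

/-- one-coordinate computation -/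
lemma coord (u v : Bool) :
    (∑ s : Bool, ∑ t : Bool,
      pm (s && t) * (if s then pm u else 1) * (if t then pm v else 1))
      = 2 * pm (u && v) := by
  cases u <;> cases v <;> simp [pm] <;> ring

lemma sum_swap4 {α β γ δ : Type*} [Fintype α] [Fintype β] [Fintype γ] [Fintype δ]
    (f : α → β → γ → δ → ℝ) :
    ∑ a, ∑ b, ∑ c, ∑ d, f a b c d = ∑ c, ∑ d, ∑ a, ∑ b, f a b c d := by
  trans ∑ a, ∑ c, ∑ b, ∑ d, f a b c d
  · exact Finset.sum_congr rfl fun a _ => Finset.sum_comm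
  trans ∑ c, ∑ a, ∑ b, ∑ d, f a b c d
  · exact Finset.sum_comm
  apply Finset.sum_congr rfl; intro c _
  trans ∑ a, ∑ d, ∑ b, f a b c d
  · exact Finset.sum_congr rfl fun a _ => Finset.sum_comm
  exact Finset.sum_comm

/-- Key identity: the signed sum of characters reproduces `2^n · IP`. -/
lemma key (n : ℕ) (x y : Fin n → Bool) :
    ∑ S : Finset (Fin n), ∑ T : Finset (Fin n),
      (∏ i, pm (decide (i ∈ S) && decide (i ∈ T))) *
        ((∏ i ∈ S, pm (x i)) * (∏ i ∈ T, pm (y i)))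
      = 2 ^ n * ∏ i, pm (x i && y i) := by
  have h1 : ∀ S : Finset (Fin n), ∀ z : Fin n → Bool,
      (∏ i ∈ S, pm (z i)) = ∏ i, (if decide (i ∈ S) then pm (z i) else 1) := by
    intro S z
    simp only [decide_eq_true_eq]
    rw [Finset.prod_ite_mem, Finset.univ_inter]
  -- rewrite sums over Finsets as sums over Boolean functions
  rw [← Equiv.sum_comp (fsEquiv n) (fun S => _)]
  simp only [← Equiv.sum_comp (fsEquiv n) (fun T => _)]
  have mem : ∀ (s : Fin n → Bool) (i : Fin n), (i ∈ fsEquiv n s) = (s i = true) := by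
    intro s i; simp [fsEquiv]
  calc ∑ s : Fin n → Bool, ∑ t : Fin n → Bool,
      (∏ i, pm (decide (i ∈ fsEquiv n s) && decide (i ∈ fsEquiv n t))) *
        ((∏ i ∈ fsEquiv n s, pm (x i)) * (∏ i ∈ fsEquiv n t, pm (y i)))
      = ∑ s : Fin n → Bool, ∑ t : Fin n → Bool,
        ∏ i, (pm (s i && t i) * (if s i then pm (x i) else 1) *
          (if t i then pm (y i) else 1)) := by
        apply Finset.sum_congr rfl; intro s _
        apply Finset.sum_congr rfl; intro t _
        rw [h1 _ x, h1 _ y, ← Finset.prod_mul_distrib, ← Finset.prod_mul_distrib]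
        apply Finset.prod_congr rfl; intro i _
        simp only [mem]
        simp [mul_assoc]
    _ = ∑ s : Fin n → Bool, ∏ i, ∑ t : Bool,
        (pm (s i && t) * (if s i then pm (x i) else 1) *
          (if t then pm (y i) else 1)) := by
        apply Finset.sum_congr rfl; intro s _
        rw [Fintype.prod_sum]
    _ = ∏ i, ∑ s : Bool, ∑ t : Bool,
        (pm (s && t) * (if s then pm (x i) else 1) *
          (if t then pm (y i) else 1)) := by
        rw [Fintype.prod_sum]
    _ = ∏ i, (2 * pm (x i && y i)) := by
        apply Finset.prod_congr rfl; intro i _; exact coord (x i) (y i)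
    _ = 2 ^ n * ∏ i, pm (x i && y i) := by
        rw [Finset.prod_mul_distrib]; simp

/-- Any real-valued `P` on `{−1,1}^n × {−1,1}^n` that pointwise `1/3`-approximates the
inner product function `IP_n(x,y) = ∏_i pm (x i && y i)` has spectral norm
`∑_{S,T ⊆ [n]} |P̂(S,T)| ≥ (2/3)·2^n`, where
`P̂(S,T) = 4^{−n} ∑_{x,y} P(x,y)·χ_S(x)·χ_T(y)`. -/
theorem stmt_5 (n : ℕ) (hn : 1 ≤ n) (P : (Fin n → Bool) → (Fin n → Bool) → ℝ)
    (hP : ∀ x y, |P x y - ∏ i, pm (x i && y i)| ≤ 1 / 3) :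
    (2 / 3 : ℝ) * 2 ^ n ≤
      ∑ S : Finset (Fin n), ∑ T : Finset (Fin n),
        |(1 / 4 ^ n : ℝ) * ∑ x : Fin n → Bool, ∑ y : Fin n → Bool,
          P x y * (∏ i ∈ S, pm (x i)) * (∏ i ∈ T, pm (y i))| := by
  classical
  set IP : (Fin n → Bool) → (Fin n → Bool) → ℝ :=
    fun x y => ∏ i, pm (x i && y i) with hIPdef
  set c : Finset (Fin n) → Finset (Fin n) → ℝ :=
    fun S T => ∏ i, pm (decide (i ∈ S) && decide (i ∈ T)) with hcdef
  have hc1 : ∀ S T, |c S T| = 1 := by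
    intro S T
    rw [hcdef]
    simp only []
    rw [Finset.abs_prod]
    simp [pm_abs]
  set A : Finset (Fin n) → Finset (Fin n) → ℝ :=
    fun S T => (1 / 4 ^ n : ℝ) * ∑ x : Fin n → Bool, ∑ y : Fin n → Bool,
      P x y * (∏ i ∈ S, pm (x i)) * (∏ i ∈ T, pm (y i)) with hAdef
  have step1 : ∑ S : Finset (Fin n), ∑ T : Finset (Fin n), c S T * A S T ≤
      ∑ S : Finset (Fin n), ∑ T : Finset (Fin n), |A S T| := by
    apply Finset.sum_le_sum; intro S _
    apply Finset.sum_le_sum; intro T _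
    calc c S T * A S T ≤ |c S T * A S T| := le_abs_self _
      _ = |A S T| := by rw [abs_mul, hc1, one_mul]
  -- rearrange the quadruple sum
  have step2 : ∑ S : Finset (Fin n), ∑ T : Finset (Fin n), c S T * A S T =
      (1 / 4 ^ n : ℝ) * ∑ x : Fin n → Bool, ∑ y : Fin n → Bool,
        P x y * (2 ^ n * IP x y) := by
    have expand : ∀ S T, c S T * A S T =
        (1 / 4 ^ n : ℝ) * ∑ x : Fin n → Bool, ∑ y : Fin n → Bool,
          P x y * (c S T * ((∏ i ∈ S, pm (x i)) * (∏ i ∈ T, pm (y i)))) := by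
      intro S T
      rw [hAdef]
      simp only [Finset.mul_sum]
      apply Finset.sum_congr rfl; intro x _
      apply Finset.sum_congr rfl; intro y _
      ring
    simp only [expand, ← Finset.mul_sum]
    congr 1
    rw [sum_swap4]
    apply Finset.sum_congr rfl; intro x _
    apply Finset.sum_congr rfl; intro y _
    simp only [← Finset.mul_sum]
    congr 1
    simp only [hcdef, hIPdef]
    exact key n x y
  -- pointwise correlation bound
  have hcorr : ∀ x y, (2 / 3 : ℝ) ≤ P x y * IP x y := by
    intro x y
    have hsq : IP x y * IP x y = 1 := by
      rw [hIPdef]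
      simp only []
      rw [← Finset.prod_mul_distrib]
      simp [pm_sq]
    have habs : |IP x y| = 1 := by
      rw [hIPdef]; simp only []; rw [Finset.abs_prod]; simp [pm_abs]
    have : P x y * IP x y = 1 + (P x y - IP x y) * IP x y := by
      rw [sub_mul, hsq]; ring
    rw [this]
    have h2 : |(P x y - IP x y) * IP x y| ≤ 1 / 3 := by
      rw [abs_mul, habs, mul_one]; exact hP x y
    nlinarith [neg_abs_le ((P x y - IP x y) * IP x y)]
  -- count: card (Fin n → Bool) = 2^n
  have hcard : (Finset.univ : Finset (Fin n → Bool)).card = 2 ^ n := by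
    simp [Finset.card_univ]
  have step3 : (2 / 3 : ℝ) * (2 ^ n * 2 ^ n) ≤
      ∑ x : Fin n → Bool, ∑ y : Fin n → Bool, P x y * IP x y := by
    calc (2 / 3 : ℝ) * (2 ^ n * 2 ^ n)
        = ∑ _x : Fin n → Bool, ∑ _y : Fin n → Bool, (2 / 3 : ℝ) := by
          rw [Finset.sum_const, Finset.sum_const, hcard]
          push_cast
          ring
      _ ≤ ∑ x : Fin n → Bool, ∑ y : Fin n → Bool, P x y * IP x y := by
          apply Finset.sum_le_sum; intro x _
          apply Finset.sum_le_sum; intro y _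
          exact hcorr x y
  have h4 : (4 : ℝ) ^ n = 2 ^ n * 2 ^ n := by
    rw [← mul_pow]; norm_num
  calc (2 / 3 : ℝ) * 2 ^ n
      = (1 / 4 ^ n : ℝ) * (2 ^ n * ((2 / 3) * (2 ^ n * 2 ^ n))) := by
        rw [h4]; field_simp
    _ ≤ (1 / 4 ^ n : ℝ) * (2 ^ n * ∑ x : Fin n → Bool, ∑ y : Fin n → Bool,
          P x y * IP x y) := by
        apply mul_le_mul_of_nonneg_left _ (by positivity)
        exact mul_le_mul_of_nonneg_left step3 (by positivity)
    _ = ∑ S : Finset (Fin n), ∑ T : Finset (Fin n), c S T * A S T := by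
        rw [step2]
        congr 1
        rw [Finset.mul_sum]
        apply Finset.sum_congr rfl; intro x _
        rw [Finset.mul_sum]
        apply Finset.sum_congr rfl; intro y _
        ring
    _ ≤ ∑ S : Finset (Fin n), ∑ T : Finset (Fin n), |A S T| := step1
end

section
/- For every n ≥ 1, every subset S ⊆ [n], and every set T of strings in {−1,1}^n, |∑_{i ∈ S} ∑_{y ∈ T} y_i| ≤ √n · 2^n. Equivalently, the discrepancy of the addressing function ADDR_n(i, y) = y_i under the uniform distribution on [n] × {−1,1}^n is at most 1/√n: for every rectangle S × T, |(1/(n·2^n)) ∑_{i∈S, y∈T} y_i| ≤ 1/√n. -/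
lemma pm_not (b : Bool) : pm (!b) = -pm b := by cases b <;> simp [pm]

lemma orth {n : ℕ} {i j : Fin n} (hij : i ≠ j) :
    ∑ y : Fin n → Bool, pm (y i) * pm (y j) = 0 := by
  classical
  apply Finset.sum_ninvolution (fun y => Function.update y i (!y i))
  · intro y
    simp [Function.update_self, Function.update_of_ne hij.symm, pm_not]
  · intro y h heq
    have := congrFun heq i
    simp at this
  · intro y; exact Finset.mem_univ _
  · intro y
    funext k
    by_cases hk : k = i
    · subst hk; simp
    · simp [Function.update_of_ne hk]

lemma sum_sq {n : ℕ} (S : Finset (Fin n)) :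
    ∑ y : Fin n → Bool, (∑ i ∈ S, pm (y i)) ^ 2 = 2 ^ n * S.card := by
  classical
  have h1 : ∀ y : Fin n → Bool, (∑ i ∈ S, pm (y i)) ^ 2
      = ∑ i ∈ S, ∑ j ∈ S, pm (y i) * pm (y j) := by
    intro y; rw [sq, Finset.sum_mul_sum]
  simp_rw [h1]
  rw [Finset.sum_comm]
  have h2 : ∀ i ∈ S, ∑ y : Fin n → Bool, ∑ j ∈ S, pm (y i) * pm (y j)
      = (2 : ℝ) ^ n := by
    intro i hi
    rw [Finset.sum_comm]
    have h3 : ∀ j ∈ S, ∑ y : Fin n → Bool, pm (y i) * pm (y j)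
        = if j = i then (2 : ℝ) ^ n else 0 := by
      intro j hj
      by_cases hji : j = i
      · subst hji
        simp [pm_sq, Finset.card_univ, Fintype.card_fun]
      · rw [orth (Ne.symm hji)]; simp [hji]
    rw [Finset.sum_congr rfl h3, Finset.sum_ite_eq' S i (fun _ => (2:ℝ)^n)]
    simp [hi]
  rw [Finset.sum_congr rfl h2, Finset.sum_const, nsmul_eq_mul, mul_comm]

/-- For every `n ≥ 1`, every `S ⊆ [n]` and every set `T` of strings in `{−1,1}^n`,
`|∑_{i∈S} ∑_{y∈T} y_i| ≤ √n · 2^n`; equivalently, the discrepancy of the addressing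
function `ADDR_n(i,y) = y_i` under the uniform distribution on `[n] × {−1,1}^n` is at
most `1/√n`: for every rectangle `S × T`,
`|(1/(n·2^n)) ∑_{i∈S, y∈T} y_i| ≤ 1/√n`. -/
theorem stmt_6 (n : ℕ) (hn : 1 ≤ n) (S : Finset (Fin n)) (T : Finset (Fin n → Bool)) :
    |∑ i ∈ S, ∑ y ∈ T, pm (y i)| ≤ Real.sqrt n * 2 ^ n ∧
    |(1 / (n * 2 ^ n) : ℝ) * ∑ i ∈ S, ∑ y ∈ T, pm (y i)| ≤ 1 / Real.sqrt n := by
  classical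
  set f : (Fin n → Bool) → ℝ := fun y => ∑ i ∈ S, pm (y i) with hf
  have hswap : ∑ i ∈ S, ∑ y ∈ T, pm (y i) = ∑ y ∈ T, f y := Finset.sum_comm
  have habs : |∑ y ∈ T, f y| ≤ ∑ y : Fin n → Bool, |f y| := by
    calc |∑ y ∈ T, f y| ≤ ∑ y ∈ T, |f y| := Finset.abs_sum_le_sum_abs _ _
    _ ≤ ∑ y : Fin n → Bool, |f y| :=
      Finset.sum_le_sum_of_subset_of_nonneg (Finset.subset_univ T)
        (fun _ _ _ => abs_nonneg _)
  have hcs : (∑ y : Fin n → Bool, |f y|) ^ 2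
      ≤ (2 : ℝ) ^ n * (2 ^ n * S.card) := by
    have := Finset.sum_mul_sq_le_sq_mul_sq Finset.univ (fun _ => (1 : ℝ)) (fun y => |f y|)
    simp only [one_mul, one_pow, Finset.sum_const, Finset.card_univ, Fintype.card_fun,
      Fintype.card_bool, Fintype.card_fin, nsmul_eq_mul, mul_one, sq_abs] at this
    calc (∑ y : Fin n → Bool, |f y|) ^ 2 ≤ (2^n : ℕ) * ∑ y : Fin n → Bool, f y ^ 2 := this
    _ = (2 : ℝ) ^ n * (2 ^ n * S.card) := by rw [sum_sq]; push_cast; ring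
  have hcard : (S.card : ℝ) ≤ n := by
    exact_mod_cast le_trans (Finset.card_le_card (Finset.subset_univ S))
      (le_of_eq (Finset.card_univ (α := Fin n) ▸ (Fintype.card_fin n)))
  have hbound : ∑ y : Fin n → Bool, |f y| ≤ Real.sqrt n * 2 ^ n := by
    have hsq : (∑ y : Fin n → Bool, |f y|) ^ 2 ≤ (Real.sqrt n * 2 ^ n) ^ 2 := by
      have : (Real.sqrt n * 2 ^ n) ^ 2 = (n : ℝ) * (2^n * 2^n) := by
        rw [mul_pow, Real.sq_sqrt (by positivity)]; ring
      rw [this]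
      calc (∑ y : Fin n → Bool, |f y|) ^ 2 ≤ (2 : ℝ) ^ n * (2 ^ n * S.card) := hcs
      _ ≤ (n : ℝ) * (2^n * 2^n) := by nlinarith [pow_pos (by norm_num : (0:ℝ) < 2) n]
    have h0 : (0:ℝ) ≤ ∑ y : Fin n → Bool, |f y| :=
      Finset.sum_nonneg fun _ _ => abs_nonneg _
    have h1 : (0:ℝ) ≤ Real.sqrt n * 2 ^ n := by positivity
    nlinarith
  have main : |∑ i ∈ S, ∑ y ∈ T, pm (y i)| ≤ Real.sqrt n * 2 ^ n := by
    rw [hswap]; exact le_trans habs hbound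
  refine ⟨main, ?_⟩
  have hn' : (0:ℝ) < n := by exact_mod_cast hn
  have hs : (0:ℝ) < Real.sqrt n := Real.sqrt_pos.2 hn'
  rw [abs_mul]
  have hc : |(1 / (n * 2 ^ n) : ℝ)| = 1 / (n * 2^n) := by
    rw [abs_of_pos]; positivity
  rw [hc]
  have key : (1 / (n * 2^n) : ℝ) * (Real.sqrt n * 2^n) = 1 / Real.sqrt n := by
    have h2 : (0:ℝ) < 2^n := by positivity
    have hnn : Real.sqrt n * Real.sqrt n = (n:ℝ) := Real.mul_self_sqrt hn'.le
    field_simp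
    nlinarith [hnn, h2]
  calc (1 / (n * 2^n) : ℝ) * |∑ i ∈ S, ∑ y ∈ T, pm (y i)|
      ≤ (1 / (n * 2^n) : ℝ) * (Real.sqrt n * 2^n) := by
        apply mul_le_mul_of_nonneg_left main; positivity
  _ = 1 / Real.sqrt n := key
end

section
/- The function h̃ : {−1,1}^n × {−1,1}^n → {−1,0,1}, viewed as a function of 2n Boolean input coordinates, is transitive: for all coordinates i, j ∈ [2n] there exists a permutation σ of [2n] with σ(i) = j such that h̃ is invariant under permuting its input coordinates by σ. -/
/-- The inner product function `IP_m(s,t) = (−1)^{#{i : s_i = t_i = −1}}`. -/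
def IP {m : ℕ} (s t : Fin m → Bool) : ℝ := ∏ i, pm (s i && t i)

/-- The Hadamard codeword of `s ∈ {−1,1}^m`: the string in `{−1,1}^{2^m}`, indexed by
`t ∈ {−1,1}^m`, whose `t`-entry is `∏_{i : s_i = −1} t_i`. -/
def Had {m : ℕ} (s : Fin m → Bool) (t : Fin m → Bool) : ℝ :=
  ∏ i, if s i then pm (t i) else 1

/-- `x ∈ {H(s), −H(s)}` for the string `x ∈ {−1,1}^{2^m}` (indexed by `{−1,1}^m`). -/
def IsHadCodeword {m : ℕ} (x : (Fin m → Bool) → Bool) (s : Fin m → Bool) : Prop :=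
  (∀ t, pm (x t) = Had s t) ∨ (∀ t, pm (x t) = -Had s t)

/-- A function of its input coordinates (indexed by `ι`) is transitive if for all
coordinates `i, j` there is a permutation `σ` of the coordinates with `σ i = j` under
which the function is invariant. -/
def IsTransitiveFn {ι α β : Type*} (F : (ι → α) → β) : Prop :=
  ∀ i j : ι, ∃ σ : Equiv.Perm ι, σ i = j ∧ ∀ x : ι → α, F (fun a => x (σ a)) = F x

lemma pm_xor (a b : Bool) : pm (xor a b) = pm a * pm b := by
  cases a <;> cases b <;> norm_num [pm]

/-- xor-translation as a permutation of `Fin m → Bool`. -/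
def xorPerm {m : ℕ} (u : Fin m → Bool) : Equiv.Perm (Fin m → Bool) where
  toFun t := fun i => xor (t i) (u i)
  invFun t := fun i => xor (t i) (u i)
  left_inv t := by funext i; simp
  right_inv t := by funext i; simp

lemma Had_xor {m : ℕ} (s t u : Fin m → Bool) :
    Had s (fun i => xor (t i) (u i)) = Had s t * Had s u := by
  unfold Had
  rw [← Finset.prod_mul_distrib]
  apply Finset.prod_congr rfl
  intro i _
  by_cases hs : s i <;> simp [hs, pm_xor]

lemma Had_sign {m : ℕ} (s u : Fin m → Bool) : Had s u = 1 ∨ Had s u = -1 := by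
  have h := Had_xor s u u
  have h2 : (fun i => xor (u i) (u i)) = fun _ : Fin m => false := by
    funext i; simp
  rw [h2] at h
  have h3 : Had s (fun _ : Fin m => false) = 1 := by
    unfold Had; apply Finset.prod_eq_one; intro i _; by_cases hs : s i <;> simp [hs, pm]
  rw [h3] at h
  exact mul_self_eq_one_iff.mp h.symm

lemma codeword_shift {m : ℕ} (x : (Fin m → Bool) → Bool) (s u : Fin m → Bool)
    (hx : IsHadCodeword x s) :
    IsHadCodeword (fun t => x (fun i => xor (t i) (u i))) s := by
  rcases Had_sign s u with hu | hu <;> rcases hx with hx | hx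
  · left; intro t; rw [hx, Had_xor, hu, mul_one]
  · right; intro t; rw [hx, Had_xor, hu, mul_one]
  · right; intro t; rw [hx, Had_xor, hu]; ring
  · left; intro t; rw [hx, Had_xor, hu]; ring

lemma exists_codeword_shift {m : ℕ} (x : (Fin m → Bool) → Bool) (u : Fin m → Bool) :
    (∃ s, IsHadCodeword (fun t => x (fun i => xor (t i) (u i))) s) ↔
      ∃ s, IsHadCodeword x s := by
  constructor
  · rintro ⟨s, hs⟩
    refine ⟨s, ?_⟩
    have := codeword_shift _ s u hs
    have he : (fun t => x fun i => xor (xor (t i) (u i)) (u i)) = x := by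
      funext t; congr 1; funext i; simp
    simpa [he] using this
  · rintro ⟨s, hs⟩; exact ⟨s, codeword_shift x s u hs⟩

lemma IP_symm {m : ℕ} (s t : Fin m → Bool) : IP s t = IP t s := by
  unfold IP
  apply Finset.prod_congr rfl
  intro i _
  rw [Bool.and_comm]

section
variable {m : ℕ} (h : ((Fin m → Bool) → Bool) → ((Fin m → Bool) → Bool) → ℝ)
  (hcode : ∀ x y s t, IsHadCodeword x s → IsHadCodeword y t → h x y = IP s t)
  (hstar : ∀ x y,
      ((¬ ∃ s, IsHadCodeword x s) ∨ (¬ ∃ t, IsHadCodeword y t)) → h x y = 0)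

include hcode hstar

lemma h_symm (x y : (Fin m → Bool) → Bool) : h y x = h x y := by
  by_cases hx : ∃ s, IsHadCodeword x s
  · by_cases hy : ∃ t, IsHadCodeword y t
    · obtain ⟨s, hs⟩ := hx; obtain ⟨t, ht⟩ := hy
      rw [hcode x y s t hs ht, hcode y x t s ht hs, IP_symm]
    · rw [hstar x y (Or.inr hy), hstar y x (Or.inl hy)]
  · rw [hstar x y (Or.inl hx), hstar y x (Or.inr hx)]

lemma h_shift (x y : (Fin m → Bool) → Bool) (u v : Fin m → Bool) :
    h (fun t => x (fun i => xor (t i) (u i))) (fun t => y (fun i => xor (t i) (v i)))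
      = h x y := by
  by_cases hx : ∃ s, IsHadCodeword x s
  · by_cases hy : ∃ t, IsHadCodeword y t
    · obtain ⟨s, hs⟩ := hx; obtain ⟨t, ht⟩ := hy
      rw [hcode x y s t hs ht,
        hcode _ _ s t (codeword_shift x s u hs) (codeword_shift y t v ht)]
    · rw [hstar x y (Or.inr hy),
        hstar _ _ (Or.inr (by rwa [exists_codeword_shift]))]
  · rw [hstar x y (Or.inl hx),
      hstar _ _ (Or.inl (by rwa [exists_codeword_shift]))]

end

lemma xorPerm_spec {m : ℕ} (a b : Fin m → Bool) :
    xorPerm (fun i => xor (a i) (b i)) a = b := by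
  funext i
  simp [xorPerm]

/-- The partial function `h̃` (which equals `IP_m(s,t)` when the two halves of the
input are signed Hadamard codewords `±H(s), ±H(t)`, and `0` otherwise), viewed as a
function of its `2n` Boolean coordinates (`n = 2^m`), is transitive. -/
theorem stmt_7 (m : ℕ) (hm : 1 ≤ m)
    (h : ((Fin m → Bool) → Bool) → ((Fin m → Bool) → Bool) → ℝ)
    (hcode : ∀ x y s t, IsHadCodeword x s → IsHadCodeword y t → h x y = IP s t)
    (hstar : ∀ x y,
      ((¬ ∃ s, IsHadCodeword x s) ∨ (¬ ∃ t, IsHadCodeword y t)) → h x y = 0) :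
    IsTransitiveFn (fun z : ((Fin m → Bool) ⊕ (Fin m → Bool)) → Bool =>
      h (fun t => z (Sum.inl t)) (fun t => z (Sum.inr t))) := by
  intro i j
  rcases i with a | a <;> rcases j with b | b
  · refine ⟨Equiv.sumCongr (xorPerm (fun i => xor (a i) (b i))) (Equiv.refl _), ?_, ?_⟩
    · simp [xorPerm_spec]
    · intro z
      simp only [Equiv.sumCongr_apply, Sum.map_inl, Sum.map_inr, Equiv.refl_apply, id]
      have := h_shift h hcode hstar (fun t => z (Sum.inl t)) (fun t => z (Sum.inr t))
        (fun i => xor (a i) (b i)) (fun _ => false)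
      simpa [xorPerm] using this
  · refine ⟨(Equiv.sumCongr (xorPerm (fun i => xor (a i) (b i))) (Equiv.refl _)).trans
      (Equiv.sumComm _ _), ?_, ?_⟩
    · simp [xorPerm_spec]
    · intro z
      simp only [Equiv.trans_apply, Equiv.sumCongr_apply, Sum.map_inl, Sum.map_inr,
        Equiv.refl_apply, Equiv.sumComm_apply, Sum.swap_inl, Sum.swap_inr, id]
      rw [h_symm h hcode hstar]
      have := h_shift h hcode hstar (fun t => z (Sum.inl t)) (fun t => z (Sum.inr t))
        (fun _ => false) (fun i => xor (a i) (b i))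
      simpa [xorPerm] using this
  · refine ⟨(Equiv.sumCongr (Equiv.refl _) (xorPerm (fun i => xor (a i) (b i)))).trans
      (Equiv.sumComm _ _), ?_, ?_⟩
    · simp [xorPerm_spec]
    · intro z
      simp only [Equiv.trans_apply, Equiv.sumCongr_apply, Sum.map_inl, Sum.map_inr,
        Equiv.refl_apply, Equiv.sumComm_apply, Sum.swap_inl, Sum.swap_inr, id]
      rw [h_symm h hcode hstar]
      have := h_shift h hcode hstar (fun t => z (Sum.inl t)) (fun t => z (Sum.inr t))
        (fun i => xor (a i) (b i)) (fun _ => false)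
      simpa [xorPerm] using this
  · refine ⟨Equiv.sumCongr (Equiv.refl _) (xorPerm (fun i => xor (a i) (b i))), ?_, ?_⟩
    · simp [xorPerm_spec]
    · intro z
      simp only [Equiv.sumCongr_apply, Sum.map_inl, Sum.map_inr, Equiv.refl_apply, id]
      have := h_shift h hcode hstar (fun t => z (Sum.inl t)) (fun t => z (Sum.inr t))
        (fun _ => false) (fun i => xor (a i) (b i))
      simpa [xorPerm] using this
end

section
/- Let V, W be sets, let f : V^n → W be transitive as a function of its n coordinates, and let g : {−1,1}^m → V be transitive as a function of its m Boolean coordinates. Then the block composition F : ({−1,1}^m)^n → W defined by F(X_1,…,X_n) = f(g(X_1),…,g(X_n)) is transitive as a function of its nm Boolean coordinates. -/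
/-- If `f : V^n → W` is transitive in its `n` coordinates and `g : {−1,1}^m → V` is
transitive in its `m` Boolean coordinates, then the block composition
`F(X_1,…,X_n) = f(g(X_1),…,g(X_n))` is transitive in its `nm` Boolean coordinates. -/
theorem stmt_8 {V W : Type*} (n m : ℕ)
    (f : (Fin n → V) → W) (g : (Fin m → Bool) → V)
    (hf : IsTransitiveFn f) (hg : IsTransitiveFn g) :
    IsTransitiveFn (fun x : Fin n × Fin m → Bool =>
      f (fun i => g (fun j => x (i, j)))) := by
  rintro ⟨i₁, j₁⟩ ⟨i₂, j₂⟩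
  obtain ⟨τ, hτ, hτinv⟩ := hf i₁ i₂
  obtain ⟨π, hπ, hπinv⟩ := hg j₁ j₂
  refine ⟨Equiv.prodCongr τ π, by simp [hτ, hπ], fun x => ?_⟩
  have step : ∀ i : Fin n, g (fun j => x (τ i, π j)) = g (fun j => x (τ i, j)) :=
    fun i => hπinv (fun j => x (τ i, j))
  simp only [Equiv.prodCongr_apply, Prod.map]
  calc f (fun i => g (fun j => x (τ i, π j)))
      = f (fun i => g (fun j => x (τ i, j))) := by simp only [step]
    _ = f (fun i => g (fun j => x (i, j))) := hτinv (fun i => g (fun j => x (i, j)))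
end

section
/- Let A, B be finite sets, G : A × B → {−1,1}, and let μ : A × B → [0,∞) be a probability distribution that is balanced with respect to G, i.e., ∑_{(a,b)} G(a,b)·μ(a,b) = 0. Let ν : {−1,1}^n → [0,∞) be a probability distribution. For X ∈ A^n, Y ∈ B^n write G^n(X,Y) = (G(X_1,Y_1),…,G(X_n,Y_n)) ∈ {−1,1}^n and define λ(X,Y) = 2^n · ν(G^n(X,Y)) · ∏_{i=1}^n μ(X_i,Y_i). Then for every z ∈ {−1,1}^n, ∑_{(X,Y) : G^n(X,Y) = z} λ(X,Y) = ν(z); consequently λ is a probability distribution on A^n × B^n, and for all functions r, h : {−1,1}^n → ℝ one has ∑_{X,Y} r(G^n(X,Y))·h(G^n(X,Y))·λ(X,Y) = ∑_{z} r(z)·h(z)·ν(z). -/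
section Aux

variable {A B : Type*} [Fintype A] [Fintype B]

lemma half_lemma (G : A → B → Bool) (μ : A → B → ℝ)
    (hμ1 : ∑ a : A, ∑ b : B, μ a b = 1)
    (hbal : ∑ a : A, ∑ b : B, pm (G a b) * μ a b = 0) (c : Bool) :
    ∑ a : A, ∑ b : B, (if G a b = c then μ a b else 0) = 1 / 2 := by
  have pt : ∀ a b, pm (G a b) * μ a b
      = (if G a b = false then μ a b else 0) - (if G a b = true then μ a b else 0) := by
    intro a b; cases hg : G a b <;> simp [pm]
  have dif := hbal
  simp_rw [pt, Finset.sum_sub_distrib] at dif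
  have tot : (∑ a : A, ∑ b : B, (if G a b = false then μ a b else 0))
      + (∑ a : A, ∑ b : B, (if G a b = true then μ a b else 0)) = 1 := by
    rw [← hμ1, ← Finset.sum_add_distrib]
    refine Finset.sum_congr rfl fun a _ => ?_
    rw [← Finset.sum_add_distrib]
    refine Finset.sum_congr rfl fun b _ => ?_
    cases hg : G a b <;> simp [hg]
  cases c <;> linarith

lemma mass_lemma (G : A → B → Bool) (μ : A → B → ℝ)
    (hμ1 : ∑ a : A, ∑ b : B, μ a b = 1)
    (hbal : ∑ a : A, ∑ b : B, pm (G a b) * μ a b = 0)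
    (n : ℕ) (z : Fin n → Bool) :
    ∑ X : Fin n → A, ∑ Y : Fin n → B,
      (if (fun i => G (X i) (Y i)) = z then ∏ i, μ (X i) (Y i) else 0)
      = (1 / 2) ^ n := by
  have step : ∀ (X : Fin n → A) (Y : Fin n → B),
      (if (fun i => G (X i) (Y i)) = z then ∏ i, μ (X i) (Y i) else 0)
      = ∏ i, (if G (X i) (Y i) = z i then μ (X i) (Y i) else 0) := by
    intro X Y
    rw [Fintype.prod_ite_zero]
    congr 1
    simp [funext_iff]
  simp_rw [step]
  have factor : ∑ X : Fin n → A, ∑ Y : Fin n → B,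
      ∏ i, (if G (X i) (Y i) = z i then μ (X i) (Y i) else 0)
      = ∏ i, ∑ a : A, ∑ b : B, (if G a b = z i then μ a b else 0) := by
    symm
    rw [Fintype.prod_sum (fun (i : Fin n) (a : A) =>
      ∑ b : B, if G a b = z i then μ a b else 0)]
    refine Finset.sum_congr rfl fun X _ => ?_
    rw [Fintype.prod_sum (fun (i : Fin n) (b : B) =>
      if G (X i) b = z i then μ (X i) b else 0)]
  rw [factor, Finset.prod_congr rfl fun i _ => half_lemma G μ hμ1 hbal (z i)]
  simp

end Aux

/-- Lifting a balanced distribution `μ` on `A × B` by a distribution `ν` on `{−1,1}^n`: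
with `λ(X,Y) = 2^n · ν(G^n(X,Y)) · ∏_i μ(X_i,Y_i)`, for every `z ∈ {−1,1}^n` the total
`λ`-mass of `{(X,Y) : G^n(X,Y) = z}` equals `ν(z)`; consequently `λ` is a probability
distribution, and `∑_{X,Y} r(G^n(X,Y))·h(G^n(X,Y))·λ(X,Y) = ∑_z r(z)·h(z)·ν(z)` for
all `r, h : (Fin n → Bool) → ℝ`. Here `G : A × B → {−1,1}` is encoded with Booleans
(`true ↦ −1`) and `G^n(X,Y) = (G(X_1,Y_1),…,G(X_n,Y_n))`. -/
theorem stmt_11 {A B : Type*} [Fintype A] [Fintype B]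
    (G : A → B → Bool) (μ : A → B → ℝ)
    (hμ0 : ∀ a b, 0 ≤ μ a b) (hμ1 : ∑ a : A, ∑ b : B, μ a b = 1)
    (hbal : ∑ a : A, ∑ b : B, pm (G a b) * μ a b = 0)
    (n : ℕ) (ν : (Fin n → Bool) → ℝ)
    (hν0 : ∀ z, 0 ≤ ν z) (hν1 : ∑ z : Fin n → Bool, ν z = 1)
    (lam : (Fin n → A) → (Fin n → B) → ℝ)
    (hlam : ∀ X Y, lam X Y
      = 2 ^ n * ν (fun i => G (X i) (Y i)) * ∏ i, μ (X i) (Y i)) :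
    (∀ z : Fin n → Bool,
      ∑ X : Fin n → A, ∑ Y : Fin n → B,
        (if (fun i => G (X i) (Y i)) = z then lam X Y else 0) = ν z) ∧
    ((∀ X Y, 0 ≤ lam X Y) ∧ ∑ X : Fin n → A, ∑ Y : Fin n → B, lam X Y = 1) ∧
    (∀ r h : (Fin n → Bool) → ℝ,
      ∑ X : Fin n → A, ∑ Y : Fin n → B,
        r (fun i => G (X i) (Y i)) * h (fun i => G (X i) (Y i)) * lam X Y
      = ∑ z : Fin n → Bool, r z * h z * ν z) := by
  -- general lemma: for any f, ∑_{X,Y} f(G^n) ∏ μ = (1/2)^n ∑_z f z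
  have gen : ∀ f : (Fin n → Bool) → ℝ,
      ∑ X : Fin n → A, ∑ Y : Fin n → B,
        f (fun i => G (X i) (Y i)) * ∏ i, μ (X i) (Y i)
      = (1 / 2 : ℝ) ^ n * ∑ z : Fin n → Bool, f z := by
    intro f
    have expand : ∀ (X : Fin n → A) (Y : Fin n → B),
        f (fun i => G (X i) (Y i)) * ∏ i, μ (X i) (Y i)
        = ∑ z : Fin n → Bool, f z *
            (if (fun i => G (X i) (Y i)) = z then ∏ i, μ (X i) (Y i) else 0) := by
      intro X Y
      rw [Finset.sum_eq_single (fun i => G (X i) (Y i))]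
      · simp
      · intro z _ hz; simp [Ne.symm hz]
      · simp
    simp_rw [expand]
    have swap : ∑ X : Fin n → A, ∑ Y : Fin n → B, ∑ z : Fin n → Bool,
          f z * (if (fun i => G (X i) (Y i)) = z then ∏ i, μ (X i) (Y i) else 0)
        = ∑ z : Fin n → Bool, ∑ X : Fin n → A, ∑ Y : Fin n → B,
          f z * (if (fun i => G (X i) (Y i)) = z then ∏ i, μ (X i) (Y i) else 0) :=
      calc _ = ∑ X : Fin n → A, ∑ z : Fin n → Bool, ∑ Y : Fin n → B,
            f z * (if (fun i => G (X i) (Y i)) = z then ∏ i, μ (X i) (Y i) else 0) :=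
            Finset.sum_congr rfl fun X _ => Finset.sum_comm
        _ = _ := Finset.sum_comm
    rw [swap, Finset.mul_sum]
    refine Finset.sum_congr rfl fun z _ => ?_
    simp_rw [← Finset.mul_sum]
    rw [mass_lemma G μ hμ1 hbal n z, mul_comm]
  have part1 : ∀ z : Fin n → Bool,
      ∑ X : Fin n → A, ∑ Y : Fin n → B,
        (if (fun i => G (X i) (Y i)) = z then lam X Y else 0) = ν z := by
    intro z
    have key := gen (fun w => if w = z then 2 ^ n * ν w else 0)
    have eq1 : ∀ (X : Fin n → A) (Y : Fin n → B),
        (if (fun i => G (X i) (Y i)) = z then lam X Y else 0)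
        = (if (fun i => G (X i) (Y i)) = z
            then 2 ^ n * ν (fun i => G (X i) (Y i)) else 0) * ∏ i, μ (X i) (Y i) := by
      intro X Y
      by_cases hc : (fun i => G (X i) (Y i)) = z <;> simp [hc, hlam]
    simp_rw [eq1]
    rw [key]
    rw [Finset.sum_eq_single z (by intro w _ hw; simp [hw]) (by simp)]
    simp [mul_comm, mul_assoc, ← mul_pow]
  refine ⟨part1, ⟨fun X Y => ?_, ?_⟩, fun r h => ?_⟩
  · rw [hlam]
    exact mul_nonneg (mul_nonneg (by positivity) (hν0 _))
      (Finset.prod_nonneg fun i _ => hμ0 _ _)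
  · have key := gen (fun w => 2 ^ n * ν w)
    calc ∑ X : Fin n → A, ∑ Y : Fin n → B, lam X Y
        = ∑ X : Fin n → A, ∑ Y : Fin n → B,
            (2 ^ n * ν (fun i => G (X i) (Y i))) * ∏ i, μ (X i) (Y i) := by
          simp_rw [hlam]
      _ = (1 / 2 : ℝ) ^ n * ∑ z : Fin n → Bool, 2 ^ n * ν z := key
      _ = 1 := by
          rw [← Finset.mul_sum, ← mul_assoc, ← mul_pow]
          norm_num [hν1]
  · have key := gen (fun w => r w * h w * (2 ^ n * ν w))
    calc ∑ X : Fin n → A, ∑ Y : Fin n → B,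
          r (fun i => G (X i) (Y i)) * h (fun i => G (X i) (Y i)) * lam X Y
        = ∑ X : Fin n → A, ∑ Y : Fin n → B,
            (r (fun i => G (X i) (Y i)) * h (fun i => G (X i) (Y i))
              * (2 ^ n * ν (fun i => G (X i) (Y i)))) * ∏ i, μ (X i) (Y i) := by
          refine Finset.sum_congr rfl fun X _ => Finset.sum_congr rfl fun Y _ => ?_
          rw [hlam]; ring
      _ = (1 / 2 : ℝ) ^ n * ∑ z : Fin n → Bool, r z * h z * (2 ^ n * ν z) := key
      _ = ∑ z : Fin n → Bool, r z * h z * ν z := by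
          rw [Finset.mul_sum]
          refine Finset.sum_congr rfl fun z _ => ?_
          have : ((1 / 2 : ℝ)) ^ n * (2 : ℝ) ^ n = 1 := by
            rw [← mul_pow]; norm_num
          calc (1 / 2 : ℝ) ^ n * (r z * h z * (2 ^ n * ν z))
              = ((1 / 2 : ℝ) ^ n * 2 ^ n) * (r z * h z * ν z) := by ring
            _ = r z * h z * ν z := by rw [this, one_mul]
end

section
/- Let A, B be finite sets, G : A × B → {−1,1}, and μ : A × B → [0,∞) a probability distribution. Then for every n ≥ 1, every nonempty subset S ⊆ [n], and all subsets A' ⊆ A^n, B' ⊆ B^n: |∑_{X ∈ A', Y ∈ B'} ∏_{i∈S} G(X_i,Y_i) · ∏_{i=1}^n μ(X_i,Y_i)| ≤ disc_{μ,|S|}(G). -/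
/-- `disc_{μ,k}(G)`: the discrepancy of the `k`-fold XOR-composition of `G` under the
product distribution `μ^{⊗k}`, i.e. the maximum over rectangles `A' × B'` of
`|∑_{X ∈ A', Y ∈ B'} ∏_{i=1}^k G(X_i,Y_i)·μ(X_i,Y_i)|`. -/
noncomputable def discXor {A B : Type*} [Fintype A] [Fintype B]
    (G : A → B → Bool) (μ : A → B → ℝ) (k : ℕ) : ℝ :=
  ⨆ A' : Finset (Fin k → A), ⨆ B' : Finset (Fin k → B),
    |∑ X ∈ A', ∑ Y ∈ B', ∏ i, pm (G (X i) (Y i)) * μ (X i) (Y i)|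

/-- For every probability distribution `μ` on `A × B`, every `n ≥ 1`, every nonempty
`S ⊆ [n]` and all subsets `A' ⊆ A^n`, `B' ⊆ B^n`:
`|∑_{X ∈ A', Y ∈ B'} ∏_{i∈S} G(X_i,Y_i) · ∏_{i=1}^n μ(X_i,Y_i)| ≤ disc_{μ,|S|}(G)`. -/
theorem stmt_12 {A B : Type*} [Fintype A] [Fintype B]
    (G : A → B → Bool) (μ : A → B → ℝ)
    (hμ0 : ∀ a b, 0 ≤ μ a b) (hμ1 : ∑ a : A, ∑ b : B, μ a b = 1)
    (n : ℕ) (hn : 1 ≤ n) (S : Finset (Fin n)) (hS : S.Nonempty)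
    (A' : Finset (Fin n → A)) (B' : Finset (Fin n → B)) :
    |∑ X ∈ A', ∑ Y ∈ B',
        (∏ i ∈ S, pm (G (X i) (Y i))) * ∏ i, μ (X i) (Y i)|
      ≤ discXor G μ S.card := by
  classical
  set k := S.card with hk
  let e : Fin k ≃ {x // x ∈ S} := S.equivFin.symm
  let gA : (Fin n → A) → ({x // x ∈ Sᶜ} → A) := fun X i => X i.1
  let gB : (Fin n → B) → ({x // x ∈ Sᶜ} → B) := fun Y i => Y i.1
  let rA : (Fin n → A) → (Fin k → A) := fun X j => X (e j).1
  let rB : (Fin n → B) → (Fin k → B) := fun Y j => Y (e j).1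
  -- the key discrepancy bound for any pair of sets on which the restrictions are injective
  have hdisc : ∀ (C : Finset (Fin n → A)) (D : Finset (Fin n → B)),
      (∀ X ∈ C, ∀ X' ∈ C, rA X = rA X' → X = X') →
      (∀ Y ∈ D, ∀ Y' ∈ D, rB Y = rB Y' → Y = Y') →
      |∑ X ∈ C, ∑ Y ∈ D, ∏ i ∈ S, pm (G (X i) (Y i)) * μ (X i) (Y i)|
        ≤ discXor G μ k := by
    intro C D hC hD
    have hre : ∀ (X : Fin n → A) (Y : Fin n → B),
        ∏ i ∈ S, pm (G (X i) (Y i)) * μ (X i) (Y i)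
          = ∏ j, pm (G (rA X j) (rB Y j)) * μ (rA X j) (rB Y j) := by
      intro X Y
      rw [← Finset.prod_coe_sort S (fun i => pm (G (X i) (Y i)) * μ (X i) (Y i)),
        ← Equiv.prod_comp e
          (fun i : {x // x ∈ S} => pm (G (X i.1) (Y i.1)) * μ (X i.1) (Y i.1))]
    have hrw : ∑ X ∈ C, ∑ Y ∈ D, ∏ i ∈ S, pm (G (X i) (Y i)) * μ (X i) (Y i)
        = ∑ U ∈ C.image rA, ∑ V ∈ D.image rB,
            ∏ j, pm (G (U j) (V j)) * μ (U j) (V j) := by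
      rw [Finset.sum_image hC]
      refine Finset.sum_congr rfl fun X _ => ?_
      rw [Finset.sum_image hD]
      exact Finset.sum_congr rfl fun Y _ => hre X Y
    rw [hrw]
    have h1 : |∑ U ∈ C.image rA, ∑ V ∈ D.image rB,
          ∏ j, pm (G (U j) (V j)) * μ (U j) (V j)|
        ≤ ⨆ B'' : Finset (Fin k → B), |∑ U ∈ C.image rA, ∑ V ∈ B'',
          ∏ j, pm (G (U j) (V j)) * μ (U j) (V j)| :=
      le_ciSup (f := fun B'' : Finset (Fin k → B) => |∑ U ∈ C.image rA, ∑ V ∈ B'',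
          ∏ j, pm (G (U j) (V j)) * μ (U j) (V j)|)
        (Set.Finite.bddAbove (Set.finite_range _)) (D.image rB)
    exact h1.trans (le_ciSup (f := fun A'' : Finset (Fin k → A) =>
      ⨆ B'' : Finset (Fin k → B), |∑ U ∈ A'', ∑ V ∈ B'',
        ∏ j, pm (G (U j) (V j)) * μ (U j) (V j)|)
      (Set.Finite.bddAbove (Set.finite_range _)) (C.image rA))
  -- split the summand over S and Sᶜ
  have hsplit : ∀ (X : Fin n → A) (Y : Fin n → B),
      (∏ i ∈ S, pm (G (X i) (Y i))) * ∏ i, μ (X i) (Y i)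
        = (∏ i ∈ S, pm (G (X i) (Y i)) * μ (X i) (Y i))
            * ∏ i ∈ Sᶜ, μ (X i) (Y i) := by
    intro X Y
    rw [← Finset.prod_mul_prod_compl S (fun i => μ (X i) (Y i)),
      Finset.prod_mul_distrib]
    ring
  -- the fiberwise decomposition
  have hfib : ∑ X ∈ A', ∑ Y ∈ B',
        (∏ i ∈ S, pm (G (X i) (Y i))) * ∏ i, μ (X i) (Y i)
      = ∑ z : ({x // x ∈ Sᶜ} → A), ∑ w : ({x // x ∈ Sᶜ} → B),
          (∑ X ∈ A'.filter (fun X => gA X = z), ∑ Y ∈ B'.filter (fun Y => gB Y = w),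
            ∏ i ∈ S, pm (G (X i) (Y i)) * μ (X i) (Y i))
            * ∏ i : {x // x ∈ Sᶜ}, μ (z i) (w i) := by
    rw [← Finset.sum_fiberwise A' gA
      (fun X => ∑ Y ∈ B', (∏ i ∈ S, pm (G (X i) (Y i))) * ∏ i, μ (X i) (Y i))]
    refine Finset.sum_congr rfl fun z _ => ?_
    calc ∑ X ∈ A'.filter (fun X => gA X = z), ∑ Y ∈ B',
            (∏ i ∈ S, pm (G (X i) (Y i))) * ∏ i, μ (X i) (Y i)
        = ∑ X ∈ A'.filter (fun X => gA X = z), ∑ w : ({x // x ∈ Sᶜ} → B),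
            ∑ Y ∈ B'.filter (fun Y => gB Y = w),
              (∏ i ∈ S, pm (G (X i) (Y i))) * ∏ i, μ (X i) (Y i) :=
          Finset.sum_congr rfl fun X _ => (Finset.sum_fiberwise B' gB _).symm
      _ = ∑ w : ({x // x ∈ Sᶜ} → B), ∑ X ∈ A'.filter (fun X => gA X = z),
            ∑ Y ∈ B'.filter (fun Y => gB Y = w),
              (∏ i ∈ S, pm (G (X i) (Y i))) * ∏ i, μ (X i) (Y i) :=
          Finset.sum_comm
      _ = _ := by
          refine Finset.sum_congr rfl fun w _ => ?_
          rw [Finset.sum_mul]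
          refine Finset.sum_congr rfl fun X hX => ?_
          have hXz : gA X = z := (Finset.mem_filter.1 hX).2
          rw [Finset.sum_mul]
          refine Finset.sum_congr rfl fun Y hY => ?_
          have hYw : gB Y = w := (Finset.mem_filter.1 hY).2
          rw [hsplit X Y]
          congr 1
          rw [← Finset.prod_coe_sort Sᶜ (fun i => μ (X i) (Y i))]
          exact Finset.prod_congr rfl fun i _ => by rw [← hXz, ← hYw]
  -- injectivity of the restriction maps on fibers
  have hinjA : ∀ z : ({x // x ∈ Sᶜ} → A), ∀ X ∈ A'.filter (fun X => gA X = z),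
      ∀ X' ∈ A'.filter (fun X => gA X = z), rA X = rA X' → X = X' := by
    intro z X hX X' hX' h
    funext i
    by_cases hi : i ∈ S
    · have h0 := congrFun h (e.symm ⟨i, hi⟩)
      simpa [rA, Equiv.apply_symm_apply] using h0
    · have hi' : i ∈ Sᶜ := Finset.mem_compl.2 hi
      have h1 := congrFun ((Finset.mem_filter.1 hX).2) ⟨i, hi'⟩
      have h2 := congrFun ((Finset.mem_filter.1 hX').2) ⟨i, hi'⟩
      simpa [gA] using h1.trans h2.symm
  have hinjB : ∀ w : ({x // x ∈ Sᶜ} → B), ∀ Y ∈ B'.filter (fun Y => gB Y = w),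
      ∀ Y' ∈ B'.filter (fun Y => gB Y = w), rB Y = rB Y' → Y = Y' := by
    intro w Y hY Y' hY' h
    funext i
    by_cases hi : i ∈ S
    · have h0 := congrFun h (e.symm ⟨i, hi⟩)
      simpa [rB, Equiv.apply_symm_apply] using h0
    · have hi' : i ∈ Sᶜ := Finset.mem_compl.2 hi
      have h1 := congrFun ((Finset.mem_filter.1 hY).2) ⟨i, hi'⟩
      have h2 := congrFun ((Finset.mem_filter.1 hY').2) ⟨i, hi'⟩
      simpa [gB] using h1.trans h2.symm
  have hT : ∀ (z : ({x // x ∈ Sᶜ} → A)) (w : ({x // x ∈ Sᶜ} → B)),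
      |∑ X ∈ A'.filter (fun X => gA X = z), ∑ Y ∈ B'.filter (fun Y => gB Y = w),
        ∏ i ∈ S, pm (G (X i) (Y i)) * μ (X i) (Y i)| ≤ discXor G μ k :=
    fun z w => hdisc _ _ (hinjA z) (hinjB w)
  have hWnn : ∀ (z : ({x // x ∈ Sᶜ} → A)) (w : ({x // x ∈ Sᶜ} → B)),
      0 ≤ ∏ i : {x // x ∈ Sᶜ}, μ (z i) (w i) :=
    fun z w => Finset.prod_nonneg fun i _ => hμ0 _ _
  -- the total mass of the complement coordinates is 1
  have hWsum : ∑ z : ({x // x ∈ Sᶜ} → A), ∑ w : ({x // x ∈ Sᶜ} → B),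
      ∏ i : {x // x ∈ Sᶜ}, μ (z i) (w i) = 1 := by
    have h1 : ∀ z : ({x // x ∈ Sᶜ} → A),
        ∑ w : ({x // x ∈ Sᶜ} → B), ∏ i : {x // x ∈ Sᶜ}, μ (z i) (w i)
          = ∏ i : {x // x ∈ Sᶜ}, ∑ b, μ (z i) b :=
      fun z => (Fintype.prod_sum (fun i b => μ (z i) b)).symm
    calc ∑ z : ({x // x ∈ Sᶜ} → A), ∑ w : ({x // x ∈ Sᶜ} → B),
            ∏ i : {x // x ∈ Sᶜ}, μ (z i) (w i)
        = ∑ z : ({x // x ∈ Sᶜ} → A), ∏ i : {x // x ∈ Sᶜ}, ∑ b, μ (z i) b :=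
          Finset.sum_congr rfl fun z _ => h1 z
      _ = ∏ i : {x // x ∈ Sᶜ}, ∑ a, ∑ b, μ a b :=
          (Fintype.prod_sum (fun (_ : {x // x ∈ Sᶜ}) (a : A) => ∑ b, μ a b)).symm
      _ = 1 := by rw [hμ1]; exact Finset.prod_const_one
  rw [hfib]
  calc |∑ z : ({x // x ∈ Sᶜ} → A), ∑ w : ({x // x ∈ Sᶜ} → B),
          (∑ X ∈ A'.filter (fun X => gA X = z), ∑ Y ∈ B'.filter (fun Y => gB Y = w),
            ∏ i ∈ S, pm (G (X i) (Y i)) * μ (X i) (Y i))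
            * ∏ i : {x // x ∈ Sᶜ}, μ (z i) (w i)|
      ≤ ∑ z : ({x // x ∈ Sᶜ} → A), ∑ w : ({x // x ∈ Sᶜ} → B),
          |∑ X ∈ A'.filter (fun X => gA X = z), ∑ Y ∈ B'.filter (fun Y => gB Y = w),
            ∏ i ∈ S, pm (G (X i) (Y i)) * μ (X i) (Y i)|
            * ∏ i : {x // x ∈ Sᶜ}, μ (z i) (w i) := by
        refine (Finset.abs_sum_le_sum_abs _ _).trans (Finset.sum_le_sum fun z _ => ?_)
        refine (Finset.abs_sum_le_sum_abs _ _).trans (Finset.sum_le_sum fun w _ => ?_)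
        rw [abs_mul, abs_of_nonneg (hWnn z w)]
    _ ≤ ∑ z : ({x // x ∈ Sᶜ} → A), ∑ w : ({x // x ∈ Sᶜ} → B),
          discXor G μ k * ∏ i : {x // x ∈ Sᶜ}, μ (z i) (w i) := by
        refine Finset.sum_le_sum fun z _ => Finset.sum_le_sum fun w _ => ?_
        exact mul_le_mul_of_nonneg_right (hT z w) (hWnn z w)
    _ = discXor G μ k := by
        simp_rw [← Finset.mul_sum]
        rw [hWsum, mul_one]
end

section
/- Let A, B be finite sets, G : A × B → {−1,1}, μ : A × B → [0,∞) a probability distribution, n ≥ d ≥ 1 integers, and ψ : {−1,1}^n → ℝ with ψ̂(S) = 0 for every S ⊆ [n] with |S| < d. Then for all subsets A' ⊆ A^n, B' ⊆ B^n: |∑_{X ∈ A', Y ∈ B'} ψ(G(X_1,Y_1),…,G(X_n,Y_n)) · ∏_{i=1}^n μ(X_i,Y_i)| ≤ ∑_{S ⊆ [n], |S| ≥ d} |ψ̂(S)| · disc_{μ,|S|}(G). (This bounds the discrepancy of the lifted distribution against any rectangle by a Fourier-weighted sum of XOR-composed discrepancies.) -/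
open Finset

lemma le_discXor {A B : Type*} [Fintype A] [Fintype B]
    (G : A → B → Bool) (μ : A → B → ℝ) (k : ℕ)
    (A' : Finset (Fin k → A)) (B' : Finset (Fin k → B)) :
    |∑ X ∈ A', ∑ Y ∈ B', ∏ i, pm (G (X i) (Y i)) * μ (X i) (Y i)| ≤ discXor G μ k := by
  classical
  have h1 : BddAbove (Set.range fun B'' : Finset (Fin k → B) =>
      |∑ X ∈ A', ∑ Y ∈ B'', ∏ i, pm (G (X i) (Y i)) * μ (X i) (Y i)|) :=
    Set.Finite.bddAbove (Set.finite_range _)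
  have h2 : BddAbove (Set.range fun A'' : Finset (Fin k → A) =>
      ⨆ B'' : Finset (Fin k → B),
        |∑ X ∈ A'', ∑ Y ∈ B'', ∏ i, pm (G (X i) (Y i)) * μ (X i) (Y i)|) :=
    Set.Finite.bddAbove (Set.finite_range _)
  exact le_trans (le_ciSup h1 B') (le_ciSup h2 A')

lemma discXor_nonneg {A B : Type*} [Fintype A] [Fintype B]
    (G : A → B → Bool) (μ : A → B → ℝ) (k : ℕ) : 0 ≤ discXor G μ k := by
  have := le_discXor G μ k ∅ ∅
  simpa using this

lemma le_discXor_equiv {A B : Type*} [Fintype A] [Fintype B]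
    (G : A → B → Bool) (μ : A → B → ℝ) {κ : Type*} [Fintype κ] (k : ℕ) (e : Fin k ≃ κ)
    (A'' : Finset (κ → A)) (B'' : Finset (κ → B)) :
    |∑ u ∈ A'', ∑ v ∈ B'', ∏ j, pm (G (u j) (v j)) * μ (u j) (v j)| ≤ discXor G μ k := by
  classical
  have hinjA : ∀ x ∈ A'', ∀ y ∈ A'', x ∘ e = y ∘ e → x = y := by
    intro x _ y _ h
    funext j
    have := congrFun h (e.symm j)
    simpa using this
  have hinjB : ∀ x ∈ B'', ∀ y ∈ B'', x ∘ e = y ∘ e → x = y := by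
    intro x _ y _ h
    funext j
    have := congrFun h (e.symm j)
    simpa using this
  have key : ∑ u ∈ A'', ∑ v ∈ B'', ∏ j, pm (G (u j) (v j)) * μ (u j) (v j)
      = ∑ X ∈ A''.image (fun u => u ∘ e), ∑ Y ∈ B''.image (fun v => v ∘ e),
          ∏ i, pm (G (X i) (Y i)) * μ (X i) (Y i) := by
    rw [Finset.sum_image hinjA]
    refine Finset.sum_congr rfl fun u _ => ?_
    rw [Finset.sum_image hinjB]
    refine Finset.sum_congr rfl fun v _ => ?_
    exact (Equiv.prod_comp e fun j => pm (G (u j) (v j)) * μ (u j) (v j)).symm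
  rw [key]
  exact le_discXor G μ k _ _

lemma sum_prod_univ {ι : Type*} [Fintype ι] [DecidableEq ι] {α : Type*} [Fintype α]
    (f : ι → α → ℝ) :
    ∑ p : ι → α, ∏ j, f j (p j) = ∏ j, ∑ a, f j a := by
  classical
  rw [Finset.prod_univ_sum (fun _ => (Finset.univ : Finset α)) f, Fintype.piFinset_univ]

lemma TS_bound {A B : Type*} [Fintype A] [Fintype B]
    (G : A → B → Bool) (μ : A → B → ℝ)
    (hμ0 : ∀ a b, 0 ≤ μ a b) (hμ1 : ∑ a : A, ∑ b : B, μ a b = 1)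
    {n : ℕ} (S : Finset (Fin n))
    (A' : Finset (Fin n → A)) (B' : Finset (Fin n → B)) :
    |∑ X ∈ A', ∑ Y ∈ B', (∏ i ∈ S, pm (G (X i) (Y i))) * ∏ i, μ (X i) (Y i)|
      ≤ discXor G μ S.card := by
  classical
  set F : ({i : Fin n // i ∈ S} → A) → ({i : Fin n // i ∈ S} → B) → ℝ :=
    fun u v => ∏ j, pm (G (u j) (v j)) * μ (u j) (v j) with hF
  set W : ({i : Fin n // i ∈ Sᶜ} → A) → ({i : Fin n // i ∈ Sᶜ} → B) → ℝ :=
    fun p q => ∏ j, μ (p j) (q j) with hW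
  set rA : (Fin n → A) → ({i : Fin n // i ∈ S} → A) := fun X j => X j with hrA
  set rB : (Fin n → B) → ({i : Fin n // i ∈ S} → B) := fun Y j => Y j with hrB
  set cA : (Fin n → A) → ({i : Fin n // i ∈ Sᶜ} → A) := fun X j => X j with hcA
  set cB : (Fin n → B) → ({i : Fin n // i ∈ Sᶜ} → B) := fun Y j => Y j with hcB
  have hterm : ∀ (X : Fin n → A) (Y : Fin n → B),
      (∏ i ∈ S, pm (G (X i) (Y i))) * ∏ i, μ (X i) (Y i)
        = F (rA X) (rB Y) * W (cA X) (cB Y) := by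
    intro X Y
    have h1 : (∏ i : Fin n, μ (X i) (Y i))
        = (∏ i ∈ S, μ (X i) (Y i)) * ∏ i ∈ Sᶜ, μ (X i) (Y i) :=
      (Finset.prod_mul_prod_compl S _).symm
    rw [h1, ← mul_assoc, ← Finset.prod_mul_distrib]
    congr 1
    · rw [← Finset.prod_coe_sort]
    · rw [← Finset.prod_coe_sort]
  have hWnn : ∀ p q, 0 ≤ W p q := fun p q => Finset.prod_nonneg fun j _ => hμ0 _ _
  have hW1 : ∑ p : ({i : Fin n // i ∈ Sᶜ} → A), ∑ q : ({i : Fin n // i ∈ Sᶜ} → B), W p q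
      = 1 := by
    calc ∑ p : ({i : Fin n // i ∈ Sᶜ} → A), ∑ q : ({i : Fin n // i ∈ Sᶜ} → B), W p q
        = ∑ p : ({i : Fin n // i ∈ Sᶜ} → A), ∏ j, ∑ b, μ (p j) b :=
          Finset.sum_congr rfl fun p _ => sum_prod_univ fun j b => μ (p j) b
      _ = ∏ j : {i : Fin n // i ∈ Sᶜ}, ∑ a, ∑ b, μ a b :=
          sum_prod_univ fun _ a => ∑ b, μ a b
      _ = 1 := by simp [hμ1]
  have key : ∑ X ∈ A', ∑ Y ∈ B', (∏ i ∈ S, pm (G (X i) (Y i))) * ∏ i, μ (X i) (Y i)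
      = ∑ p : ({i : Fin n // i ∈ Sᶜ} → A), ∑ q : ({i : Fin n // i ∈ Sᶜ} → B),
          W p q * ∑ u ∈ (A'.filter fun X => cA X = p).image rA,
            ∑ v ∈ (B'.filter fun Y => cB Y = q).image rB, F u v := by
    have step0 : ∑ X ∈ A', ∑ Y ∈ B', (∏ i ∈ S, pm (G (X i) (Y i))) * ∏ i, μ (X i) (Y i)
        = ∑ X ∈ A', ∑ Y ∈ B', F (rA X) (rB Y) * W (cA X) (cB Y) :=
      Finset.sum_congr rfl fun X _ => Finset.sum_congr rfl fun Y _ => hterm X Y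
    rw [step0,
      ← Finset.sum_fiberwise A' cA fun X => ∑ Y ∈ B', F (rA X) (rB Y) * W (cA X) (cB Y)]
    refine Finset.sum_congr rfl fun p _ => ?_
    have hfix : ∀ X ∈ A'.filter fun X => cA X = p,
        ∑ Y ∈ B', F (rA X) (rB Y) * W (cA X) (cB Y)
          = ∑ Y ∈ B', F (rA X) (rB Y) * W p (cB Y) := by
      intro X hX
      rw [(Finset.mem_filter.mp hX).2]
    rw [Finset.sum_congr rfl hfix]
    have step1 : ∀ X ∈ A'.filter fun X => cA X = p,
        ∑ Y ∈ B', F (rA X) (rB Y) * W p (cB Y)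
          = ∑ q : ({i : Fin n // i ∈ Sᶜ} → B),
              ∑ Y ∈ B'.filter fun Y => cB Y = q, F (rA X) (rB Y) * W p q := by
      intro X _
      rw [← Finset.sum_fiberwise B' cB fun Y => F (rA X) (rB Y) * W p (cB Y)]
      refine Finset.sum_congr rfl fun q _ => Finset.sum_congr rfl fun Y hY => ?_
      rw [(Finset.mem_filter.mp hY).2]
    rw [Finset.sum_congr rfl step1, Finset.sum_comm]
    refine Finset.sum_congr rfl fun q _ => ?_
    have hAinj : ∀ X ∈ A'.filter fun X => cA X = p, ∀ X' ∈ A'.filter fun X => cA X = p,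
        rA X = rA X' → X = X' := by
      intro X hX X' hX' h
      have hc : cA X = cA X' := by
        rw [(Finset.mem_filter.mp hX).2, (Finset.mem_filter.mp hX').2]
      funext i
      by_cases hi : i ∈ S
      · exact congrFun h ⟨i, hi⟩
      · exact congrFun hc ⟨i, Finset.mem_compl.mpr hi⟩
    have hBinj : ∀ Y ∈ B'.filter fun Y => cB Y = q, ∀ Y' ∈ B'.filter fun Y => cB Y = q,
        rB Y = rB Y' → Y = Y' := by
      intro Y hY Y' hY' h
      have hc : cB Y = cB Y' := by
        rw [(Finset.mem_filter.mp hY).2, (Finset.mem_filter.mp hY').2]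
      funext i
      by_cases hi : i ∈ S
      · exact congrFun h ⟨i, hi⟩
      · exact congrFun hc ⟨i, Finset.mem_compl.mpr hi⟩
    rw [Finset.mul_sum, Finset.sum_image hAinj]
    refine Finset.sum_congr rfl fun X _ => ?_
    rw [Finset.mul_sum, Finset.sum_image hBinj]
    exact Finset.sum_congr rfl fun Y _ => mul_comm _ _
  rw [key]
  have hR : ∀ (p : {i : Fin n // i ∈ Sᶜ} → A) (q : {i : Fin n // i ∈ Sᶜ} → B),
      |∑ u ∈ (A'.filter fun X => cA X = p).image rA,
        ∑ v ∈ (B'.filter fun Y => cB Y = q).image rB, F u v| ≤ discXor G μ S.card := by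
    intro p q
    exact le_discXor_equiv G μ S.card (S.orderIsoOfFin rfl).toEquiv _ _
  calc |∑ p : ({i : Fin n // i ∈ Sᶜ} → A), ∑ q : ({i : Fin n // i ∈ Sᶜ} → B),
          W p q * ∑ u ∈ (A'.filter fun X => cA X = p).image rA,
            ∑ v ∈ (B'.filter fun Y => cB Y = q).image rB, F u v|
      ≤ ∑ p : ({i : Fin n // i ∈ Sᶜ} → A), ∑ q : ({i : Fin n // i ∈ Sᶜ} → B),
          |W p q * ∑ u ∈ (A'.filter fun X => cA X = p).image rA,
            ∑ v ∈ (B'.filter fun Y => cB Y = q).image rB, F u v| := by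
        refine le_trans (Finset.abs_sum_le_sum_abs _ _) ?_
        exact Finset.sum_le_sum fun p _ => Finset.abs_sum_le_sum_abs _ _
    _ ≤ ∑ p : ({i : Fin n // i ∈ Sᶜ} → A), ∑ q : ({i : Fin n // i ∈ Sᶜ} → B),
          W p q * discXor G μ S.card := by
        refine Finset.sum_le_sum fun p _ => Finset.sum_le_sum fun q _ => ?_
        rw [abs_mul, abs_of_nonneg (hWnn p q)]
        exact mul_le_mul_of_nonneg_left (hR p q) (hWnn p q)
    _ = discXor G μ S.card := by
        have h : (∑ p : ({i : Fin n // i ∈ Sᶜ} → A), ∑ q : ({i : Fin n // i ∈ Sᶜ} → B),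
            W p q * discXor G μ S.card)
            = (∑ p : ({i : Fin n // i ∈ Sᶜ} → A), ∑ q : ({i : Fin n // i ∈ Sᶜ} → B), W p q)
              * discXor G μ S.card := by
          simp_rw [Finset.sum_mul]
        rw [h, hW1, one_mul]

lemma pm_prod_eq {n : ℕ} (x y : Fin n → Bool) :
    ∏ i : Fin n, (pm (y i) * pm (x i) + 1) = if y = x then (2 : ℝ) ^ n else 0 := by
  by_cases h : y = x
  · subst h
    rw [if_pos rfl]
    have : ∀ i : Fin n, pm (y i) * pm (y i) + 1 = 2 := by
      intro i; cases (y i) <;> norm_num [pm]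
    rw [Finset.prod_congr rfl fun i _ => this i]
    simp
  · rw [if_neg h]
    obtain ⟨i, hi⟩ := Function.ne_iff.mp h
    refine Finset.prod_eq_zero (Finset.mem_univ i) ?_
    cases hy : y i <;> cases hx : x i <;> simp_all [pm]

lemma fourier_expand {n : ℕ} (ψ : (Fin n → Bool) → ℝ) (x : Fin n → Bool) :
    ψ x = ∑ S : Finset (Fin n),
      ((1 / 2 ^ n : ℝ) * ∑ y : Fin n → Bool, ψ y * ∏ i ∈ S, pm (y i)) * ∏ i ∈ S, pm (x i) := by
  classical
  have h1 : ∀ S : Finset (Fin n),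
      ((1 / 2 ^ n : ℝ) * ∑ y : Fin n → Bool, ψ y * ∏ i ∈ S, pm (y i)) * ∏ i ∈ S, pm (x i)
        = (1 / 2 ^ n : ℝ) * ∑ y : Fin n → Bool,
            ψ y * ∏ i ∈ S, pm (y i) * pm (x i) := by
    intro S
    rw [mul_assoc, Finset.sum_mul]
    congr 1
    refine Finset.sum_congr rfl fun y _ => ?_
    rw [mul_assoc, ← Finset.prod_mul_distrib]
  rw [Finset.sum_congr rfl fun S _ => h1 S, ← Finset.mul_sum, Finset.sum_comm]
  have h2 : ∀ y : Fin n → Bool,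
      ∑ S : Finset (Fin n), ψ y * ∏ i ∈ S, pm (y i) * pm (x i)
        = ψ y * ∏ i : Fin n, (pm (y i) * pm (x i) + 1) := by
    intro y
    rw [← Finset.mul_sum]
    congr 1
    rw [Finset.prod_add]
    simp [← Finset.powerset_univ]
  rw [Finset.sum_congr rfl fun y _ => h2 y]
  have h3 : ∀ y : Fin n → Bool,
      ψ y * ∏ i : Fin n, (pm (y i) * pm (x i) + 1)
        = ψ y * if y = x then (2 : ℝ) ^ n else 0 := by
    intro y; rw [pm_prod_eq]
  rw [Finset.sum_congr rfl fun y _ => h3 y]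
  simp only [mul_ite, mul_zero]
  rw [Finset.sum_ite_eq' Finset.univ x fun y => ψ y * (2:ℝ)^n, if_pos (Finset.mem_univ x)]
  have h2n : (2:ℝ)^n ≠ 0 := by positivity
  field_simp

/-- If `ψ : {−1,1}^n → ℝ` has no Fourier mass below level `d`
(`ψ̂(S) = 2^{-n} ∑_x ψ(x) χ_S(x) = 0` whenever `|S| < d`), then for every rectangle
`A' × B'`, `|∑_{X ∈ A', Y ∈ B'} ψ(G(X_1,Y_1),…,G(X_n,Y_n)) · ∏_i μ(X_i,Y_i)|`
is at most `∑_{S ⊆ [n], |S| ≥ d} |ψ̂(S)| · disc_{μ,|S|}(G)`. -/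
theorem stmt_13 {A B : Type*} [Fintype A] [Fintype B]
    (G : A → B → Bool) (μ : A → B → ℝ)
    (hμ0 : ∀ a b, 0 ≤ μ a b) (hμ1 : ∑ a : A, ∑ b : B, μ a b = 1)
    (n d : ℕ) (hd : 1 ≤ d) (hdn : d ≤ n)
    (ψ : (Fin n → Bool) → ℝ)
    (hψ : ∀ S : Finset (Fin n), S.card < d →
      (1 / 2 ^ n : ℝ) * ∑ x : Fin n → Bool, ψ x * ∏ i ∈ S, pm (x i) = 0)
    (A' : Finset (Fin n → A)) (B' : Finset (Fin n → B)) :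
    |∑ X ∈ A', ∑ Y ∈ B',
        ψ (fun i => G (X i) (Y i)) * ∏ i, μ (X i) (Y i)|
      ≤ ∑ S ∈ Finset.univ.filter (fun S : Finset (Fin n) => d ≤ S.card),
          |(1 / 2 ^ n : ℝ) * ∑ x : Fin n → Bool, ψ x * ∏ i ∈ S, pm (x i)|
            * discXor G μ S.card := by
  classical
  set c : Finset (Fin n) → ℝ :=
    fun S => (1 / 2 ^ n : ℝ) * ∑ x : Fin n → Bool, ψ x * ∏ i ∈ S, pm (x i) with hc
  set T : Finset (Fin n) → ℝ :=
    fun S => ∑ X ∈ A', ∑ Y ∈ B', (∏ i ∈ S, pm (G (X i) (Y i))) * ∏ i, μ (X i) (Y i) with hT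
  have key : ∑ X ∈ A', ∑ Y ∈ B', ψ (fun i => G (X i) (Y i)) * ∏ i, μ (X i) (Y i)
      = ∑ S : Finset (Fin n), c S * T S := by
    have expand : ∀ (X : Fin n → A) (Y : Fin n → B),
        ψ (fun i => G (X i) (Y i)) * ∏ i, μ (X i) (Y i)
          = ∑ S : Finset (Fin n),
              c S * ((∏ i ∈ S, pm (G (X i) (Y i))) * ∏ i, μ (X i) (Y i)) := by
      intro X Y
      rw [fourier_expand ψ (fun i => G (X i) (Y i)), Finset.sum_mul]
      exact Finset.sum_congr rfl fun S _ => by ring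
    rw [Finset.sum_congr rfl fun X _ => Finset.sum_congr rfl fun Y (_ : Y ∈ B') => expand X Y]
    rw [Finset.sum_congr rfl fun X (_ : X ∈ A') =>
      Finset.sum_comm (s := B') (t := Finset.univ), Finset.sum_comm]
    refine Finset.sum_congr rfl fun S _ => ?_
    rw [hT, Finset.mul_sum]
    exact Finset.sum_congr rfl fun X _ => (Finset.mul_sum _ _ _).symm
  rw [key]
  have h1 : |∑ S : Finset (Fin n), c S * T S| ≤ ∑ S : Finset (Fin n), |c S * T S| :=
    Finset.abs_sum_le_sum_abs _ _
  have h2 : ∑ S : Finset (Fin n), |c S * T S|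
      = ∑ S ∈ Finset.univ.filter (fun S : Finset (Fin n) => d ≤ S.card), |c S * T S| := by
    refine (Finset.sum_filter_of_ne ?_).symm
    intro S _ hne
    by_contra hcard
    exact hne (by rw [show c S = 0 from hψ S (lt_of_not_ge hcard), zero_mul, abs_zero])
  refine le_trans h1 (le_trans (le_of_eq h2) ?_)
  refine Finset.sum_le_sum fun S _ => ?_
  rw [abs_mul]
  exact mul_le_mul_of_nonneg_left (TS_bound G μ hμ0 hμ1 S A' B') (abs_nonneg _)
end

section
/- Every real-valued function P on {−1,1}^{2n²} satisfying |P(X) − f(X)| ≤ 1/3 for all inputs X has spectral norm at least (2/3)·n^n; that is, the 1/3-approximate spectral norm of the transitive function f is at least (2/3)·2^{n log n}. -/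
/-- The spectral norm `∑_{S ⊆ ι} |P̂(S)|` of `P : {−1,1}^ι → ℝ`, where
`P̂(S) = 2^{−|ι|} ∑_x P(x) χ_S(x)`. -/
noncomputable def specNorm {ι : Type*} [Fintype ι] [DecidableEq ι]
    (P : (ι → Bool) → ℝ) : ℝ :=
  ∑ S : Finset ι,
    |(1 / 2 ^ Fintype.card ι : ℝ) * ∑ x : ι → Bool, P x * ∏ i ∈ S, pm (x i)|

lemma pm_inj {a b : Bool} (h : pm a = pm b) : a = b := by
  cases a <;> cases b <;> simp_all [pm] <;> norm_num at h

lemma Had_abs {m : ℕ} (s t : Fin m → Bool) : |Had s t| = 1 := by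
  rw [Had, Finset.abs_prod]
  refine Finset.prod_eq_one fun i _ => ?_
  split <;> simp [pm_abs]

lemma Had_or {m : ℕ} (s t : Fin m → Bool) : Had s t = 1 ∨ Had s t = -1 := by
  have := Had_abs s t
  rcases abs_eq (by norm_num : (0:ℝ) ≤ 1) |>.mp this with h | h <;> [left; right] <;> linarith

noncomputable def hadBool {m : ℕ} (s t : Fin m → Bool) : Bool := decide (Had s t = -1)

lemma pm_hadBool {m : ℕ} (s t : Fin m → Bool) : pm (hadBool s t) = Had s t := by
  rcases Had_or s t with h | h <;> simp [hadBool, h, pm] <;> norm_num [h]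

noncomputable def encode {m : ℕ} (p : Bool × (Fin m → Bool)) : (Fin m → Bool) → Bool :=
  fun t => xor p.1 (hadBool p.2 t)

lemma pm_encode {m : ℕ} (ε : Bool) (s t : Fin m → Bool) :
    pm (encode (ε, s) t) = pm ε * Had s t := by
  rw [encode, pm_xor, pm_hadBool]

lemma Had_false {m : ℕ} (s : Fin m → Bool) : Had s (fun _ => false) = 1 := by
  rw [Had]; refine Finset.prod_eq_one fun i _ => ?_; split <;> simp [pm]

lemma Had_single {m : ℕ} (s : Fin m → Bool) (j : Fin m) :
    Had s (fun i => decide (i = j)) = pm (s j) := by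
  rw [Had, Finset.prod_eq_single j]
  · cases s j <;> simp [pm]
  · intro i _ hij; simp [hij, pm]
  · simp

lemma encode_false {m : ℕ} (ε : Bool) (s : Fin m → Bool) :
    encode (ε, s) (fun _ => false) = ε := by
  have : pm (encode (ε, s) fun _ => false) = pm ε := by
    rw [pm_encode, Had_false, mul_one]
  exact pm_inj this

lemma encode_single {m : ℕ} (ε : Bool) (s : Fin m → Bool) (j : Fin m) :
    encode (ε, s) (fun i => decide (i = j)) = xor ε (s j) := by
  have : pm (encode (ε, s) fun i => decide (i = j)) = pm (xor ε (s j)) := by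
    rw [pm_encode, Had_single, pm_xor]
  exact pm_inj this

lemma encode_inj {m : ℕ} : Function.Injective (encode (m := m)) := by
  rintro ⟨ε, s⟩ ⟨δ, t⟩ hEq
  have h0 : ε = δ := by
    have := congrFun hEq (fun _ => false)
    rwa [encode_false, encode_false] at this
  subst h0
  have hs : s = t := by
    funext j
    have := congrFun hEq (fun i => decide (i = j))
    rw [encode_single, encode_single] at this
    cases ε <;> simpa using this
  simp [hs]

lemma cw_iff {m : ℕ} (x : (Fin m → Bool) → Bool) (s : Fin m → Bool) :
    IsHadCodeword x s ↔ x = encode (false, s) ∨ x = encode (true, s) := by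
  constructor
  · rintro (hc | hc)
    · left; funext t
      exact pm_inj ((hc t).trans (by rw [pm_encode]; simp [pm]))
    · right; funext t
      exact pm_inj ((hc t).trans (by rw [pm_encode]; simp [pm]))
  · rintro (rfl | rfl)
    · left; intro t; rw [pm_encode]; simp [pm]
    · right; intro t; rw [pm_encode]; simp [pm]

lemma cw_encode {m : ℕ} (ε : Bool) (s : Fin m → Bool) : IsHadCodeword (encode (ε, s)) s := by
  rw [cw_iff]; cases ε <;> simp

lemma exists_cw_iff {m : ℕ} (x : (Fin m → Bool) → Bool) :
    (∃ s, IsHadCodeword x s) ↔ x ∈ Set.range (encode (m := m)) := by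
  constructor
  · rintro ⟨s, hs⟩
    rcases (cw_iff x s).mp hs with rfl | rfl
    exacts [⟨(false, s), rfl⟩, ⟨(true, s), rfl⟩]
  · rintro ⟨⟨ε, s⟩, rfl⟩; exact ⟨s, cw_encode ε s⟩

lemma IP_abs {m : ℕ} (s t : Fin m → Bool) : |IP s t| = 1 := by
  rw [IP, Finset.abs_prod]
  exact Finset.prod_eq_one fun i _ => pm_abs _

lemma IP_sq {m : ℕ} (s t : Fin m → Bool) : IP s t ^ 2 = 1 := by
  rw [← sq_abs, IP_abs, one_pow]

section Block
variable {m : ℕ} (h : ((Fin m → Bool) → Bool) → ((Fin m → Bool) → Bool) → ℝ)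
  (hcode : ∀ x y s t, IsHadCodeword x s → IsHadCodeword y t → h x y = IP s t)
  (hstar : ∀ x y,
      ((¬ ∃ s, IsHadCodeword x s) ∨ (¬ ∃ t, IsHadCodeword y t)) → h x y = 0)

abbrev A (m : ℕ) := Fin m → Bool

/-- the joint encoding of a pair of signed codewords as one block input -/
noncomputable def E {m : ℕ} (p : (Bool × A m) × (Bool × A m)) : (A m ⊕ A m) → Bool :=
  Sum.elim (encode p.1) (encode p.2)

lemma E_inj {m : ℕ} : Function.Injective (E (m := m)) := by
  rintro ⟨p1, p2⟩ ⟨q1, q2⟩ hEq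
  have h1 : encode p1 = encode q1 := funext fun t => congrFun hEq (Sum.inl t)
  have h2 : encode p2 = encode q2 := funext fun t => congrFun hEq (Sum.inr t)
  rw [Prod.mk.injEq]
  exact ⟨encode_inj h1, encode_inj h2⟩

include hcode hstar

lemma h_cases (x y : (Fin m → Bool) → Bool) :
    h x y = 0 ∨ ∃ s t, IsHadCodeword x s ∧ IsHadCodeword y t ∧ h x y = IP s t := by
  by_cases hx : ∃ s, IsHadCodeword x s
  · by_cases hy : ∃ t, IsHadCodeword y t
    · obtain ⟨s, hs⟩ := hx; obtain ⟨t, ht⟩ := hy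
      exact Or.inr ⟨s, t, hs, ht, hcode x y s t hs ht⟩
    · exact Or.inl (hstar x y (Or.inr hy))
  · exact Or.inl (hstar x y (Or.inl hx))

lemma h_abs_le (x y : (Fin m → Bool) → Bool) : |h x y| ≤ 1 := by
  rcases h_cases h hcode hstar x y with h0 | ⟨s, t, _, _, hIP⟩
  · simp [h0]
  · rw [hIP, IP_abs]

lemma h_abs_eq_sq (x y : (Fin m → Bool) → Bool) : |h x y| = h x y ^ 2 := by
  rcases h_cases h hcode hstar x y with h0 | ⟨s, t, _, _, hIP⟩
  · simp [h0]
  · rw [hIP, IP_abs, IP_sq]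

lemma h_off_support (u : (A m ⊕ A m) → Bool) (hu : u ∉ Set.range (E (m := m))) :
    h (fun t => u (Sum.inl t)) (fun t => u (Sum.inr t)) = 0 := by
  by_cases hx : ∃ s, IsHadCodeword (fun t => u (Sum.inl t)) s
  · by_cases hy : ∃ t, IsHadCodeword (fun t => u (Sum.inr t)) t
    · exfalso
      obtain ⟨p1, hp1⟩ := (exists_cw_iff _).mp hx
      obtain ⟨p2, hp2⟩ := (exists_cw_iff _).mp hy
      refine hu ⟨(p1, p2), ?_⟩
      funext b
      cases b with
      | inl t => exact (congrFun hp1 t)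
      | inr t => exact (congrFun hp2 t)
    · exact hstar _ _ (Or.inr hy)
  · exact hstar _ _ (Or.inl hx)

lemma h_at_E (p : (Bool × A m) × (Bool × A m)) :
    h (fun t => E p (Sum.inl t)) (fun t => E p (Sum.inr t)) = IP p.1.2 p.2.2 := by
  exact hcode _ _ _ _ (cw_encode p.1.1 p.1.2) (cw_encode p.2.1 p.2.2)

/-- sum over blocks restricted to the support, reindexed by the encoding. -/
lemma block_sum_eq (G : ((A m ⊕ A m) → Bool) → ℝ)
    (hG : ∀ u, h (fun t => u (Sum.inl t)) (fun t => u (Sum.inr t)) = 0 → G u = 0) :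
    ∑ u : (A m ⊕ A m) → Bool, G u = ∑ p : (Bool × A m) × (Bool × A m), G (E p) := by
  classical
  rw [← Finset.sum_image (f := G) (g := E) (s := Finset.univ)
      (fun x _ y _ hxy => E_inj hxy)]
  refine (Finset.sum_subset (Finset.subset_univ _) fun u _ hu => ?_).symm
  refine hG u (h_off_support h hcode hstar u ?_)
  rintro ⟨p, rfl⟩
  exact hu (Finset.mem_image.mpr ⟨p, Finset.mem_univ _, rfl⟩)

lemma block_sum_sq :
    ∑ u : (A m ⊕ A m) → Bool,
      (h (fun t => u (Sum.inl t)) (fun t => u (Sum.inr t))) ^ 2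
      = (2 * 2 ^ m : ℝ) ^ 2 := by
  rw [block_sum_eq h hcode hstar _ (fun u h0 => by rw [h0]; ring)]
  have : ∀ p : (Bool × A m) × (Bool × A m),
      (h (fun t => E p (Sum.inl t)) (fun t => E p (Sum.inr t))) ^ 2 = 1 := by
    intro p; rw [h_at_E h hcode hstar, IP_sq]
  rw [Finset.sum_congr rfl (fun p _ => this p), Finset.sum_const, Finset.card_univ]
  simp [Fintype.card_prod, Fintype.card_fun]
  ring

lemma block_coeff_bound (Q : (A m ⊕ A m) → Prop) [DecidablePred Q] :
    |∑ u : (A m ⊕ A m) → Bool,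
        h (fun t => u (Sum.inl t)) (fun t => u (Sum.inr t)) *
          ∏ b : A m ⊕ A m, (if Q b then pm (u b) else 1)|
      ≤ 4 * 2 ^ m := by
  classical
  -- reindex over the support
  rw [block_sum_eq h hcode hstar _ (fun u h0 => by rw [h0, zero_mul])]
  -- notation
  set X : Bool × A m → ℝ :=
    fun p => ∏ τ : A m, (if Q (Sum.inl τ) then pm (encode p τ) else 1) with hX
  set Y : Bool × A m → ℝ :=
    fun p => ∏ τ : A m, (if Q (Sum.inr τ) then pm (encode p τ) else 1) with hY
  set q : Fin m → ℝ :=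
    fun i => ∏ τ : A m, (if Q (Sum.inr τ) then pm (τ i) else 1) with hq
  have q_abs : ∀ i, |q i| = 1 := by
    intro i; rw [hq]; dsimp only
    rw [Finset.abs_prod]
    refine Finset.prod_eq_one fun τ _ => ?_
    split <;> simp [pm_abs]
  have r_nonneg : ∀ (b : Bool) (i : Fin m), (0:ℝ) ≤ pm b * q i + 1 := by
    intro b i
    have : |pm b * q i| = 1 := by rw [abs_mul, pm_abs, q_abs, mul_one]
    nlinarith [neg_abs_le (pm b * q i)]
  -- step 1: the summand factors
  have hfac : ∀ p : (Bool × A m) × (Bool × A m),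
      h (fun t => E p (Sum.inl t)) (fun t => E p (Sum.inr t)) *
          ∏ b : A m ⊕ A m, (if Q b then pm (E p b) else 1)
        = IP p.1.2 p.2.2 * (X p.1 * Y p.2) := by
    intro p
    rw [h_at_E h hcode hstar, Fintype.prod_sum_type]
    rfl
  rw [Finset.sum_congr rfl fun p _ => hfac p]
  rw [Fintype.sum_prod_type]
  have hswap : ∀ p1 : Bool × A m,
      ∑ p2 : Bool × A m, IP p1.2 p2.2 * (X p1 * Y p2)
        = X p1 * ∑ p2 : Bool × A m, IP p1.2 p2.2 * Y p2 := by
    intro p1; rw [Finset.mul_sum]; exact Finset.sum_congr rfl fun p2 _ => by ring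
  rw [Finset.sum_congr rfl fun p1 _ => hswap p1]
  -- Y evaluated and summed over t
  have hY_eq : ∀ (δ : Bool) (t : A m),
      Y (δ, t) = (∏ τ : A m, (if Q (Sum.inr τ) then pm δ else 1)) *
        ∏ i, (if t i then q i else 1) := by
    intro δ t
    rw [hY]; dsimp only
    have : ∀ τ : A m, (if Q (Sum.inr τ) then pm (encode (δ, t) τ) else 1)
        = (if Q (Sum.inr τ) then pm δ else 1) * (if Q (Sum.inr τ) then Had t τ else 1) := by
      intro τ; rw [pm_encode]; split <;> ring
    rw [Finset.prod_congr rfl fun τ _ => this τ, Finset.prod_mul_distrib]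
    congr 1
    have : ∀ τ : A m, (if Q (Sum.inr τ) then Had t τ else 1)
        = ∏ i, (if Q (Sum.inr τ) then (if t i then pm (τ i) else 1) else 1) := by
      intro τ; rw [Had]; split
      · rfl
      · exact (Finset.prod_const_one).symm
    rw [Finset.prod_congr rfl fun τ _ => this τ, Finset.prod_comm]
    refine Finset.prod_congr rfl fun i _ => ?_
    cases ht : t i
    · simp
    · simp [hq]
  -- exact t-sum
  have ht_sum : ∀ s : A m,
      ∑ t : A m, IP s t * ∏ i, (if t i then q i else 1)
        = ∏ i, (pm (s i) * q i + 1) := by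
    intro s
    have : ∀ t : A m, IP s t * ∏ i, (if t i then q i else 1)
        = ∏ i, (pm (s i && t i) * (if t i then q i else 1)) := by
      intro t; rw [IP, Finset.prod_mul_distrib]
    rw [Finset.sum_congr rfl fun t _ => this t]
    have key := Finset.prod_univ_sum (t := fun _ : Fin m => (Finset.univ : Finset Bool))
      (f := fun i c => pm (s i && c) * if c then q i else 1)
    rw [Fintype.piFinset_univ] at key
    rw [← key]
    refine Finset.prod_congr rfl fun i _ => ?_
    rw [Fintype.sum_bool]
    cases s i <;> simp [pm] <;> ring
  -- bound the inner sum over p2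
  have hinner : ∀ s : A m,
      |∑ p2 : Bool × A m, IP s p2.2 * Y p2| ≤ 2 * ∏ i, (pm (s i) * q i + 1) := by
    intro s
    rw [Fintype.sum_prod_type]
    have : ∀ δ : Bool, ∑ t : A m, IP s t * Y (δ, t)
        = (∏ τ : A m, (if Q (Sum.inr τ) then pm δ else 1)) *
            ∏ i, (pm (s i) * q i + 1) := by
      intro δ
      rw [← ht_sum s, Finset.mul_sum]
      refine Finset.sum_congr rfl fun t _ => ?_
      rw [hY_eq δ t]; ring
    rw [Fintype.sum_bool, this true, this false]
    have habsC : ∀ δ : Bool, |∏ τ : A m, (if Q (Sum.inr τ) then pm δ else 1)| ≤ 1 := by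
      intro δ
      rw [Finset.abs_prod]
      refine le_of_eq (Finset.prod_eq_one fun τ _ => ?_)
      split <;> simp [pm_abs]
    have hprod_nonneg : (0:ℝ) ≤ ∏ i, (pm (s i) * q i + 1) :=
      Finset.prod_nonneg fun i _ => r_nonneg (s i) i
    calc |_| ≤ |(∏ τ : A m, (if Q (Sum.inr τ) then pm true else 1)) *
            ∏ i, (pm (s i) * q i + 1)| +
          |(∏ τ : A m, (if Q (Sum.inr τ) then pm false else 1)) *
            ∏ i, (pm (s i) * q i + 1)| := abs_add_le _ _
      _ ≤ 1 * ∏ i, (pm (s i) * q i + 1) + 1 * ∏ i, (pm (s i) * q i + 1) := by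
          gcongr <;> rw [abs_mul, abs_of_nonneg hprod_nonneg] <;>
            exact mul_le_of_le_one_left hprod_nonneg (habsC _) |>.trans
              (le_of_eq (one_mul _).symm)
      _ = 2 * ∏ i, (pm (s i) * q i + 1) := by ring
  -- total bound
  have hXabs : ∀ p1 : Bool × A m, |X p1| ≤ 1 := by
    intro p1
    rw [hX]; dsimp only
    rw [Finset.abs_prod]
    refine le_of_eq (Finset.prod_eq_one fun τ _ => ?_)
    split <;> simp [pm_abs]
  calc |∑ p1 : Bool × A m, X p1 * ∑ p2 : Bool × A m, IP p1.2 p2.2 * Y p2|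
      ≤ ∑ p1 : Bool × A m, |X p1 * ∑ p2 : Bool × A m, IP p1.2 p2.2 * Y p2| :=
        Finset.abs_sum_le_sum_abs _ _
    _ ≤ ∑ p1 : Bool × A m, 2 * ∏ i, (pm (p1.2 i) * q i + 1) := by
        refine Finset.sum_le_sum fun p1 _ => ?_
        rw [abs_mul]
        calc |X p1| * |∑ p2 : Bool × A m, IP p1.2 p2.2 * Y p2|
            ≤ 1 * (2 * ∏ i, (pm (p1.2 i) * q i + 1)) := by
              apply mul_le_mul (hXabs p1) (hinner p1.2) (abs_nonneg _) zero_le_one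
          _ = 2 * ∏ i, (pm (p1.2 i) * q i + 1) := one_mul _
    _ = 2 * 2 * ∑ s : A m, ∏ i, (pm (s i) * q i + 1) := by
        rw [Fintype.sum_prod_type, Fintype.sum_bool, ← Finset.mul_sum]; ring
    _ = 4 * 2 ^ m := by
        congr 1
        · norm_num
        · have key := Finset.prod_univ_sum (t := fun _ : Fin m => (Finset.univ : Finset Bool))
            (f := fun i b => pm b * q i + 1)
          rw [Fintype.piFinset_univ] at key
          rw [← key, show ((2:ℝ)^m) = ∏ _i : Fin m, 2 by simp]
          refine Finset.prod_congr rfl fun i _ => ?_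
          rw [Fintype.sum_bool]
          simp [pm]; ring

end Block


section Global

lemma orth_s17 {ι : Type*} [Fintype ι] [DecidableEq ι] (x y : ι → Bool) :
    ∑ S : Finset ι, (∏ i ∈ S, pm (x i)) * (∏ i ∈ S, pm (y i))
      = if x = y then (2:ℝ) ^ Fintype.card ι else 0 := by
  have e1 : ∀ S : Finset ι, (∏ i ∈ S, pm (x i)) * (∏ i ∈ S, pm (y i))
      = (∏ i ∈ S, pm (x i) * pm (y i)) * ∏ i ∈ (Finset.univ : Finset ι) \ S, (1:ℝ) := by
    intro S; rw [Finset.prod_mul_distrib, Finset.prod_const_one, mul_one]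
  rw [Finset.sum_congr rfl fun S _ => e1 S]
  have e2 := (Finset.prod_add (fun i => pm (x i) * pm (y i)) (fun _ => (1:ℝ))
    (Finset.univ : Finset ι)).symm
  rw [Finset.powerset_univ] at e2
  rw [e2]
  by_cases hxy : x = y
  · subst hxy
    rw [if_pos rfl]
    have e3 : ∏ i : ι, (pm (x i) * pm (x i) + 1) = ∏ _i : ι, (2:ℝ) :=
      Finset.prod_congr rfl fun i _ => by rw [pm_sq]; norm_num
    rw [e3]
    simp
  · rw [if_neg hxy]
    obtain ⟨i, hi⟩ : ∃ i, x i ≠ y i := by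
      by_contra hc; push_neg at hc; exact hxy (funext hc)
    refine Finset.prod_eq_zero (Finset.mem_univ i) ?_
    cases hx : x i <;> cases hy : y i <;> simp_all [pm] <;> norm_num

lemma planch {ι : Type*} [Fintype ι] [DecidableEq ι] (Pf Wf : (ι → Bool) → ℝ) :
    ∑ S : Finset ι,
        (∑ x : ι → Bool, Pf x * ∏ i ∈ S, pm (x i)) *
          (∑ y : ι → Bool, Wf y * ∏ i ∈ S, pm (y i))
      = (2:ℝ) ^ Fintype.card ι * ∑ z : ι → Bool, Pf z * Wf z := by
  have e1 : ∀ S : Finset ι,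
      (∑ x : ι → Bool, Pf x * ∏ i ∈ S, pm (x i)) *
        (∑ y : ι → Bool, Wf y * ∏ i ∈ S, pm (y i))
      = ∑ x : ι → Bool, ∑ y : ι → Bool,
          (Pf x * Wf y) * ((∏ i ∈ S, pm (x i)) * (∏ i ∈ S, pm (y i))) := by
    intro S
    rw [Finset.sum_mul_sum]
    exact Finset.sum_congr rfl fun x _ => Finset.sum_congr rfl fun y _ => by ring
  rw [Finset.sum_congr rfl fun S _ => e1 S, Finset.sum_comm]
  rw [Finset.sum_congr rfl fun x _ => Finset.sum_comm]
  have e2 : ∀ x : ι → Bool, ∑ y : ι → Bool, ∑ S : Finset ι,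
      (Pf x * Wf y) * ((∏ i ∈ S, pm (x i)) * (∏ i ∈ S, pm (y i)))
      = Pf x * Wf x * (2:ℝ) ^ Fintype.card ι := by
    intro x
    have e3 : ∀ y : ι → Bool, ∑ S : Finset ι,
        (Pf x * Wf y) * ((∏ i ∈ S, pm (x i)) * (∏ i ∈ S, pm (y i)))
        = if x = y then Pf x * Wf y * (2:ℝ) ^ Fintype.card ι else 0 := by
      intro y
      rw [← Finset.mul_sum, orth_s17]
      split <;> ring
    rw [Finset.sum_congr rfl fun y _ => e3 y, Finset.sum_ite_eq, if_pos (Finset.mem_univ x)]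
  rw [Finset.sum_congr rfl fun x _ => e2 x, ← Finset.sum_mul]
  ring

lemma sum_prod_blocks {n' : ℕ} {γ : Type*} [Fintype γ] [DecidableEq γ] (f : Fin n' → (γ → Bool) → ℝ) :
    ∑ z : (Fin n' × γ) → Bool, ∏ i, f i (fun b => z (i, b))
      = ∏ i, ∑ u : γ → Bool, f i u := by
  classical
  rw [← Equiv.sum_comp (Equiv.curry (Fin n') γ Bool).symm
    (fun z => ∏ i, f i (fun b => z (i, b)))]
  have key := Finset.prod_univ_sum (t := fun _ : Fin n' => (Finset.univ : Finset (γ → Bool)))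
    (f := fun i u => f i u)
  rw [Fintype.piFinset_univ] at key
  rw [key]
  rfl

end Global


/-- Let `n = 2^m` and let `f` be the transitive function of `2n²` Boolean variables
(the PARITY of the `n` decoded inner-product values of Hadamard-encoded blocks, with
value `−1` when some block is not a signed Hadamard codeword). Every real-valued `P`
with `|P(X) − f(X)| ≤ 1/3` on all inputs has spectral norm at least
`(2/3)·n^n = (2/3)·2^{n log n}`. -/
theorem stmt_17 (m : ℕ) (hm : 1 ≤ m)
    (h : ((Fin m → Bool) → Bool) → ((Fin m → Bool) → Bool) → ℝ)
    (hcode : ∀ x y s t, IsHadCodeword x s → IsHadCodeword y t → h x y = IP s t)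
    (hstar : ∀ x y,
      ((¬ ∃ s, IsHadCodeword x s) ∨ (¬ ∃ t, IsHadCodeword y t)) → h x y = 0)
    (F : ((Fin (2 ^ m) × ((Fin m → Bool) ⊕ (Fin m → Bool))) → Bool) → ℝ)
    (hF1 : ∀ z, (∀ i : Fin (2 ^ m),
        h (fun t => z (i, Sum.inl t)) (fun t => z (i, Sum.inr t)) ≠ 0) →
      F z = ∏ i : Fin (2 ^ m),
        h (fun t => z (i, Sum.inl t)) (fun t => z (i, Sum.inr t)))
    (hF2 : ∀ z, (∃ i : Fin (2 ^ m),
        h (fun t => z (i, Sum.inl t)) (fun t => z (i, Sum.inr t)) = 0) →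
      F z = -1)
    (P : ((Fin (2 ^ m) × ((Fin m → Bool) ⊕ (Fin m → Bool))) → Bool) → ℝ)
    (hP : ∀ z, |P z - F z| ≤ 1 / 3) :
    (2 / 3 : ℝ) * ((2 : ℝ) ^ m) ^ (2 ^ m : ℕ) ≤ specNorm P := by
  classical
  let W : ((Fin (2 ^ m) × ((Fin m → Bool) ⊕ (Fin m → Bool))) → Bool) → ℝ :=
    fun z => ∏ i, h (fun t => z (i, Sum.inl t)) (fun t => z (i, Sum.inr t))
  have FW : ∀ z, F z * W z = W z ^ 2 := by
    intro z
    by_cases hz : ∀ i : Fin (2 ^ m),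
        h (fun t => z (i, Sum.inl t)) (fun t => z (i, Sum.inr t)) ≠ 0
    · rw [hF1 z hz]
      show W z * W z = W z ^ 2
      rw [sq]
    · push_neg at hz
      obtain ⟨i, hi⟩ := hz
      have hW0 : W z = 0 := Finset.prod_eq_zero (Finset.mem_univ i) hi
      rw [hF2 z ⟨i, hi⟩, hW0]; ring
  have absW : ∀ z, |W z| = W z ^ 2 := by
    intro z
    show |∏ i, _| = (∏ i, _) ^ 2
    rw [Finset.abs_prod, ← Finset.prod_pow]
    exact Finset.prod_congr rfl fun i _ => h_abs_eq_sq h hcode hstar _ _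
  have lower : ∀ z, (2 / 3 : ℝ) * W z ^ 2 ≤ P z * W z := by
    intro z
    have h1 : |(P z - F z) * W z| ≤ (1 / 3 : ℝ) * W z ^ 2 := by
      rw [abs_mul, ← absW z]
      exact mul_le_mul_of_nonneg_right (hP z) (abs_nonneg _)
    have h2 : P z * W z = F z * W z + (P z - F z) * W z := by ring
    have h3 := neg_abs_le ((P z - F z) * W z)
    rw [FW z] at h2
    linarith
  have sumW2 : ∑ z : (Fin (2 ^ m) × ((Fin m → Bool) ⊕ (Fin m → Bool))) → Bool, W z ^ 2 = (((2:ℝ) * 2 ^ m) ^ 2) ^ (2 ^ m : ℕ) := by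
    have e1 : ∀ z : (Fin (2 ^ m) × ((Fin m → Bool) ⊕ (Fin m → Bool))) → Bool, W z ^ 2 = ∏ i : Fin (2 ^ m),
        (h (fun t => z (i, Sum.inl t)) (fun t => z (i, Sum.inr t))) ^ 2 := by
      intro z
      show (∏ i, _) ^ 2 = _
      rw [Finset.prod_pow]
    rw [Finset.sum_congr rfl fun z _ => e1 z]
    calc ∑ z : (Fin (2 ^ m) × ((Fin m → Bool) ⊕ (Fin m → Bool))) → Bool, ∏ i : Fin (2 ^ m),
          (h (fun t => z (i, Sum.inl t)) (fun t => z (i, Sum.inr t))) ^ 2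
        = ∏ _i : Fin (2 ^ m), ∑ u : ((Fin m → Bool) ⊕ (Fin m → Bool)) → Bool,
            (h (fun t => u (Sum.inl t)) (fun t => u (Sum.inr t))) ^ 2 :=
          sum_prod_blocks (fun _i (u : ((Fin m → Bool) ⊕ (Fin m → Bool)) → Bool) =>
            (h (fun t => u (Sum.inl t)) (fun t => u (Sum.inr t))) ^ 2)
      _ = ∏ _i : Fin (2 ^ m), ((2:ℝ) * 2 ^ m) ^ 2 :=
          Finset.prod_congr rfl fun i _ => block_sum_sq h hcode hstar
      _ = (((2:ℝ) * 2 ^ m) ^ 2) ^ (2 ^ m : ℕ) := by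
          rw [Finset.prod_const, Finset.card_univ, Fintype.card_fin]
  have coeffW : ∀ S : Finset (Fin (2 ^ m) × ((Fin m → Bool) ⊕ (Fin m → Bool))),
      |∑ z : (Fin (2 ^ m) × ((Fin m → Bool) ⊕ (Fin m → Bool))) → Bool, W z * ∏ j ∈ S, pm (z j)| ≤ ((4:ℝ) * 2 ^ m) ^ (2 ^ m : ℕ) := by
    intro S
    have e0 : ∀ z : (Fin (2 ^ m) × ((Fin m → Bool) ⊕ (Fin m → Bool))) → Bool, W z * ∏ j ∈ S, pm (z j)
        = ∏ i : Fin (2 ^ m),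
            (h (fun t => z (i, Sum.inl t)) (fun t => z (i, Sum.inr t)) *
              ∏ b : (Fin m → Bool) ⊕ (Fin m → Bool),
                (if (i, b) ∈ S then pm (z (i, b)) else 1)) := by
      intro z
      rw [Finset.prod_mul_distrib]
      congr 1
      have hS : S = Finset.univ.filter (· ∈ S) := by ext j; simp
      rw [Finset.prod_congr hS (fun _ _ => rfl), Finset.prod_filter, Fintype.prod_prod_type]
    rw [Finset.sum_congr rfl fun z _ => e0 z]
    have e2 : ∑ z : (Fin (2 ^ m) × ((Fin m → Bool) ⊕ (Fin m → Bool))) → Bool, ∏ i : Fin (2 ^ m),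
          (h (fun t => z (i, Sum.inl t)) (fun t => z (i, Sum.inr t)) *
            ∏ b : (Fin m → Bool) ⊕ (Fin m → Bool),
              (if (i, b) ∈ S then pm (z (i, b)) else 1))
        = ∏ i : Fin (2 ^ m), ∑ u : ((Fin m → Bool) ⊕ (Fin m → Bool)) → Bool,
            (h (fun t => u (Sum.inl t)) (fun t => u (Sum.inr t)) *
              ∏ b : (Fin m → Bool) ⊕ (Fin m → Bool),
                (if (i, b) ∈ S then pm (u b) else 1)) :=
      sum_prod_blocks (fun i (u : ((Fin m → Bool) ⊕ (Fin m → Bool)) → Bool) =>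
        h (fun t => u (Sum.inl t)) (fun t => u (Sum.inr t)) *
          ∏ b : (Fin m → Bool) ⊕ (Fin m → Bool), (if (i, b) ∈ S then pm (u b) else 1))
    rw [e2, Finset.abs_prod]
    calc ∏ i : Fin (2 ^ m), |∑ u : ((Fin m → Bool) ⊕ (Fin m → Bool)) → Bool,
            (h (fun t => u (Sum.inl t)) (fun t => u (Sum.inr t)) *
              ∏ b : (Fin m → Bool) ⊕ (Fin m → Bool),
                (if (i, b) ∈ S then pm (u b) else 1))|
        ≤ ∏ _i : Fin (2 ^ m), ((4:ℝ) * 2 ^ m) := by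
          refine Finset.prod_le_prod (fun i _ => abs_nonneg _) (fun i _ => ?_)
          have := block_coeff_bound h hcode hstar (Q := fun b => (i, b) ∈ S)
          exact this
      _ = ((4:ℝ) * 2 ^ m) ^ (2 ^ m : ℕ) := by
          rw [Finset.prod_const, Finset.card_univ, Fintype.card_fin]
  have planchW := planch P W
  have spec_eq : ∑ S : Finset (Fin (2 ^ m) × ((Fin m → Bool) ⊕ (Fin m → Bool))), |∑ x : (Fin (2 ^ m) × ((Fin m → Bool) ⊕ (Fin m → Bool))) → Bool, P x * ∏ i ∈ S, pm (x i)|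
      = 2 ^ Fintype.card (Fin (2 ^ m) × ((Fin m → Bool) ⊕ (Fin m → Bool))) * specNorm P := by
    rw [specNorm, Finset.mul_sum]
    refine Finset.sum_congr rfl fun S _ => ?_
    rw [abs_mul, abs_of_pos (by positivity : (0:ℝ) < 1 / 2 ^ Fintype.card (Fin (2 ^ m) × ((Fin m → Bool) ⊕ (Fin m → Bool))))]
    field_simp
  have hNpos : (0:ℝ) < 2 ^ Fintype.card (Fin (2 ^ m) × ((Fin m → Bool) ⊕ (Fin m → Bool))) := by positivity
  have main1 : (2:ℝ) ^ Fintype.card (Fin (2 ^ m) × ((Fin m → Bool) ⊕ (Fin m → Bool))) * ((2 / 3) * (((2:ℝ) * 2 ^ m) ^ 2) ^ (2 ^ m : ℕ))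
      ≤ (2:ℝ) ^ Fintype.card (Fin (2 ^ m) × ((Fin m → Bool) ⊕ (Fin m → Bool))) * ∑ z : (Fin (2 ^ m) × ((Fin m → Bool) ⊕ (Fin m → Bool))) → Bool, P z * W z := by
    refine mul_le_mul_of_nonneg_left ?_ (le_of_lt hNpos)
    rw [← sumW2, Finset.mul_sum]
    exact Finset.sum_le_sum fun z _ => lower z
  have main2 : (2:ℝ) ^ Fintype.card (Fin (2 ^ m) × ((Fin m → Bool) ⊕ (Fin m → Bool))) * ∑ z : (Fin (2 ^ m) × ((Fin m → Bool) ⊕ (Fin m → Bool))) → Bool, P z * W z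
      ≤ (2 ^ Fintype.card (Fin (2 ^ m) × ((Fin m → Bool) ⊕ (Fin m → Bool))) * specNorm P) * ((4:ℝ) * 2 ^ m) ^ (2 ^ m : ℕ) := by
    rw [← planchW, ← spec_eq]
    calc ∑ S : Finset (Fin (2 ^ m) × ((Fin m → Bool) ⊕ (Fin m → Bool))), (∑ x : (Fin (2 ^ m) × ((Fin m → Bool) ⊕ (Fin m → Bool))) → Bool, P x * ∏ i ∈ S, pm (x i)) *
            (∑ y : (Fin (2 ^ m) × ((Fin m → Bool) ⊕ (Fin m → Bool))) → Bool, W y * ∏ i ∈ S, pm (y i))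
        ≤ |∑ S : Finset (Fin (2 ^ m) × ((Fin m → Bool) ⊕ (Fin m → Bool))), (∑ x : (Fin (2 ^ m) × ((Fin m → Bool) ⊕ (Fin m → Bool))) → Bool, P x * ∏ i ∈ S, pm (x i)) *
            (∑ y : (Fin (2 ^ m) × ((Fin m → Bool) ⊕ (Fin m → Bool))) → Bool, W y * ∏ i ∈ S, pm (y i))| := le_abs_self _
      _ ≤ ∑ S : Finset (Fin (2 ^ m) × ((Fin m → Bool) ⊕ (Fin m → Bool))), |(∑ x : (Fin (2 ^ m) × ((Fin m → Bool) ⊕ (Fin m → Bool))) → Bool, P x * ∏ i ∈ S, pm (x i)) *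
            (∑ y : (Fin (2 ^ m) × ((Fin m → Bool) ⊕ (Fin m → Bool))) → Bool, W y * ∏ i ∈ S, pm (y i))| := Finset.abs_sum_le_sum_abs _ _
      _ ≤ ∑ S : Finset (Fin (2 ^ m) × ((Fin m → Bool) ⊕ (Fin m → Bool))), |∑ x : (Fin (2 ^ m) × ((Fin m → Bool) ⊕ (Fin m → Bool))) → Bool, P x * ∏ i ∈ S, pm (x i)| *
            ((4:ℝ) * 2 ^ m) ^ (2 ^ m : ℕ) := by
          refine Finset.sum_le_sum fun S _ => ?_
          rw [abs_mul]
          exact mul_le_mul_of_nonneg_left (coeffW S) (abs_nonneg _)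
      _ = (∑ S : Finset (Fin (2 ^ m) × ((Fin m → Bool) ⊕ (Fin m → Bool))), |∑ x : (Fin (2 ^ m) × ((Fin m → Bool) ⊕ (Fin m → Bool))) → Bool, P x * ∏ i ∈ S, pm (x i)|) *
            ((4:ℝ) * 2 ^ m) ^ (2 ^ m : ℕ) := by rw [Finset.sum_mul]
  have key : (2 / 3 : ℝ) * (((2:ℝ) * 2 ^ m) ^ 2) ^ (2 ^ m : ℕ)
      ≤ specNorm P * ((4:ℝ) * 2 ^ m) ^ (2 ^ m : ℕ) := by
    have := le_trans main1 main2
    rw [mul_assoc ((2:ℝ) ^ Fintype.card (Fin (2 ^ m) × ((Fin m → Bool) ⊕ (Fin m → Bool))))] at this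
    exact le_of_mul_le_mul_left this hNpos
  have hB : (((2:ℝ) * 2 ^ m) ^ 2) ^ (2 ^ m : ℕ)
      = ((2:ℝ) ^ m) ^ (2 ^ m : ℕ) * ((4:ℝ) * 2 ^ m) ^ (2 ^ m : ℕ) := by
    rw [← mul_pow]; congr 1; ring
  have hC : (0:ℝ) < ((4:ℝ) * 2 ^ m) ^ (2 ^ m : ℕ) := by positivity
  rw [hB] at key
  have key2 : ((2 / 3 : ℝ) * ((2:ℝ) ^ m) ^ (2 ^ m : ℕ)) * ((4:ℝ) * 2 ^ m) ^ (2 ^ m : ℕ)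
      ≤ specNorm P * ((4:ℝ) * 2 ^ m) ^ (2 ^ m : ℕ) := by linarith [key]
  exact le_of_mul_le_mul_right key2 hC
end
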